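/- arXiv:1906.03055 — 7 statements merged into one kernel-verified Lean document; each statement's English description precedes it below -/
import Mathlib

section
/- The Demazure operators on k[X_1,...,X_d] satisfy the braid relation ∂_i ∂_{i+1} ∂_i = ∂_{i+1} ∂_i ∂_{i+1} for all 1 ≤ i ≤ d-2. -/
open MvPolynomial

/-- the Demazure operators satisfy the braid relation
`∂ᵢ ∂ᵢ₊₁ ∂ᵢ = ∂ᵢ₊₁ ∂ᵢ ∂ᵢ₊₁`. -/
theorem demazure_braid {k : Type*} [Field k] {n : ℕ}
    (Dem : Fin n → MvPolynomial (Fin (n + 1)) k → MvPolynomial (Fin (n + 1)) k)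
    (hDem : ∀ (i : Fin n) (f : MvPolynomial (Fin (n + 1)) k),
      (X i.castSucc - X i.succ) * Dem i f
        = f - rename (Equiv.swap i.castSucc i.succ) f)
    (i j : Fin n) (hij : (j : ℕ) = (i : ℕ) + 1)
    (f : MvPolynomial (Fin (n + 1)) k) :
    Dem i (Dem j (Dem i f)) = Dem j (Dem i (Dem j f)) := by
  set a : Fin (n + 1) := i.castSucc with ha
  set b : Fin (n + 1) := i.succ with hbdef
  set c : Fin (n + 1) := j.succ with hc
  have hb : j.castSucc = b := by
    apply Fin.ext
    simp [hbdef, Fin.val_succ, hij]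
  have hab : a ≠ b := by
    apply Fin.ne_of_val_ne
    simp [ha, hbdef]
  have hbc : b ≠ c := by
    apply Fin.ne_of_val_ne
    simp [hbdef, hc, hij]
  have hac : a ≠ c := by
    apply Fin.ne_of_val_ne
    simp [ha, hc, hij]; omega
  set s : Equiv.Perm (Fin (n + 1)) := Equiv.swap a b with hs
  set t : Equiv.Perm (Fin (n + 1)) := Equiv.swap b c with ht
  -- swap application facts
  have hsa : s a = b := Equiv.swap_apply_left a b
  have hsb : s b = a := Equiv.swap_apply_right a b
  have hsc : s c = c := Equiv.swap_apply_of_ne_of_ne hac.symm hbc.symm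
  have hta : t a = a := Equiv.swap_apply_of_ne_of_ne hab hac
  have htb : t b = c := Equiv.swap_apply_left b c
  have htc : t c = b := Equiv.swap_apply_right b c
  -- the renamed Demazure relation
  have key : ∀ (σ : Equiv.Perm (Fin (n + 1))) (m : Fin n)
      (g : MvPolynomial (Fin (n + 1)) k),
      (X (σ m.castSucc) - X (σ m.succ)) * rename σ (Dem m g)
        = rename σ g - rename (σ * Equiv.swap m.castSucc m.succ : Equiv.Perm _) g := by
    intro σ m g
    have h := congrArg (rename (σ : Fin (n + 1) → Fin (n + 1))) (hDem m g)
    simpa [map_mul, map_sub, rename_rename, Equiv.Perm.coe_mul] using h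
  have hXab : X a - X b ≠ (0 : MvPolynomial (Fin (n + 1)) k) :=
    sub_ne_zero.mpr (fun h => hab (X_injective h))
  have hXbc : X b - X c ≠ (0 : MvPolynomial (Fin (n + 1)) k) :=
    sub_ne_zero.mpr (fun h => hbc (X_injective h))
  have hXac : X a - X c ≠ (0 : MvPolynomial (Fin (n + 1)) k) :=
    sub_ne_zero.mpr (fun h => hac (X_injective h))
  -- basic relations
  have E1 := hDem i f
  have E2 := hDem j (Dem i f)
  rw [hb] at E2
  have E3 := hDem i (Dem j (Dem i f))
  have F1 := hDem j f
  rw [hb] at F1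
  have F2 := hDem i (Dem j f)
  have F3 := hDem j (Dem i (Dem j f))
  rw [hb] at F3
  -- renamed relations
  have E1s := key s i f
  rw [hsa, hsb] at E1s
  have E1t := key t i f
  rw [hta, htb] at E1t
  have E1st := key (s * t) i f
  rw [show (s * t) i.castSucc = b by rw [Equiv.Perm.mul_apply, ← ha, hta, hsa],
      show (s * t) i.succ = c by rw [Equiv.Perm.mul_apply, ← hbdef, htb, hsc]] at E1st
  have E2s := key s j (Dem i f)
  rw [hb, hsb, hsc] at E2s
  have F1s := key s j f
  rw [hb, hsb, hsc] at F1s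
  have F1t := key t j f
  rw [hb, htb, htc] at F1t
  have F1ts := key (t * s) j f
  rw [hb, show (t * s) b = a by simp [Equiv.Perm.mul_apply, hsb, hta],
      show (t * s) c = b by simp [Equiv.Perm.mul_apply, hsc, htc]] at F1ts
  have F2t := key t i (Dem j f)
  rw [hta, htb] at F2t
  -- invariance facts
  have hsP1 : rename (s : Fin (n+1) → Fin (n+1)) (Dem i f) = Dem i f :=
    mul_left_cancel₀ hXab (by
      have hss : s * s = 1 := Equiv.swap_mul_self a b
      rw [hss] at E1s
      simp only [Equiv.Perm.coe_one, rename_id, AlgHom.id_apply] at E1s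
      linear_combination (-1 : MvPolynomial (Fin (n+1)) k) * E1s - E1)
  have htQ1 : rename (t : Fin (n+1) → Fin (n+1)) (Dem j f) = Dem j f :=
    mul_left_cancel₀ hXbc (by
      have htt : t * t = 1 := Equiv.swap_mul_self b c
      rw [htt] at F1t
      simp only [Equiv.Perm.coe_one, rename_id, AlgHom.id_apply] at F1t
      linear_combination (-1 : MvPolynomial (Fin (n+1)) k) * F1t - F1)
  -- the long braid word identity
  have hperm : s * t * s = t * s * t := by
    have h1 : s * t * s = Equiv.swap a c := by
      rw [show s = Equiv.swap b a from Equiv.swap_comm a b,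
          show t = Equiv.swap c b from Equiv.swap_comm b c]
      exact Equiv.swap_mul_swap_mul_swap hbc.symm hac.symm
    have h2 : t * s * t = Equiv.swap c a := Equiv.swap_mul_swap_mul_swap hab hac
    rw [h1, h2, Equiv.swap_comm]
  have hsts : rename ((s * t * s : Equiv.Perm (Fin (n+1))) : Fin (n+1) → Fin (n+1)) f
      = rename ((t * s * t : Equiv.Perm (Fin (n+1))) : Fin (n+1) → Fin (n+1)) f := by
    rw [hperm]
  apply mul_left_cancel₀ (mul_ne_zero hXab (mul_ne_zero hXbc hXac))
  linear_combination ((X b - X c) * (X a - X c)) * E3 + (X a - X c) * E2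
    - (X b - X c) * E2s - (X b - X c) * hsP1 + E1 - E1t + E1st
    - ((X a - X b) * (X a - X c)) * F3 - (X a - X c) * F2 + (X a - X b) * F2t
    + (X a - X b) * htQ1 - F1 + F1s - F1ts - hsts
end

section
/- The operators T_i(f) = s_i(f) - ∂_i(f) on k[X_1,...,X_d] satisfy the braid relation T_i T_{i+1} T_i = T_{i+1} T_i T_{i+1} for all 1 ≤ i ≤ d-2. -/
open MvPolynomial

set_option maxHeartbeats 1000000 in
private lemma T_braid_aux {k : Type*} [Field k] {n : ℕ}
    (a b c : Fin (n + 1)) (hab : a ≠ b) (hbc : b ≠ c) (hac : a ≠ c)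
    (d1 d2 : MvPolynomial (Fin (n + 1)) k → MvPolynomial (Fin (n + 1)) k)
    (h1 : ∀ g, (X a - X b) * d1 g = g - rename (Equiv.swap a b) g)
    (h2 : ∀ g, (X b - X c) * d2 g = g - rename (Equiv.swap b c) g)
    (f : MvPolynomial (Fin (n + 1)) k) :
    rename (Equiv.swap a b) (rename (Equiv.swap b c) (rename (Equiv.swap a b) f - d1 f)
        - d2 (rename (Equiv.swap a b) f - d1 f))
      - d1 (rename (Equiv.swap b c) (rename (Equiv.swap a b) f - d1 f)
        - d2 (rename (Equiv.swap a b) f - d1 f))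
    = rename (Equiv.swap b c) (rename (Equiv.swap a b) (rename (Equiv.swap b c) f - d2 f)
        - d1 (rename (Equiv.swap b c) f - d2 f))
      - d2 (rename (Equiv.swap a b) (rename (Equiv.swap b c) f - d2 f)
        - d1 (rename (Equiv.swap b c) f - d2 f)) := by
  classical
  set σ1 : Fin (n + 1) ≃ Fin (n + 1) := Equiv.swap a b with hσ1
  set σ2 : Fin (n + 1) ≃ Fin (n + 1) := Equiv.swap b c with hσ2
  -- pushing renames through the defining relation
  have renKey : ∀ (ρ : Fin (n + 1) ≃ Fin (n + 1)) (p q : Fin (n + 1))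
      (D g g' : MvPolynomial (Fin (n + 1)) k),
      (X p - X q) * D = g - g' →
      (X (ρ p) - X (ρ q)) * rename ρ D = rename ρ g - rename ρ g' := by
    intro ρ p q D g g' h
    have := congrArg (rename (ρ : Fin (n + 1) → Fin (n + 1))) h
    simpa only [map_mul, map_sub, rename_X] using this
  -- double rename by the same swap is the identity
  have hss1 : ∀ g : MvPolynomial (Fin (n + 1)) k, rename σ1 (rename σ1 g) = g := by
    intro g
    rw [rename_rename]
    have h : ((σ1 : Fin (n+1) → Fin (n+1)) ∘ σ1) = id := by
      funext x; exact Equiv.swap_apply_self a b x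
    rw [h, rename_id, AlgHom.id_apply]
  have hss2 : ∀ g : MvPolynomial (Fin (n + 1)) k, rename σ2 (rename σ2 g) = g := by
    intro g
    rw [rename_rename]
    have h : ((σ2 : Fin (n+1) → Fin (n+1)) ∘ σ2) = id := by
      funext x; exact Equiv.swap_apply_self b c x
    rw [h, rename_id, AlgHom.id_apply]
  -- swap evaluation facts
  have e1a : σ1 a = b := Equiv.swap_apply_left a b
  have e1b : σ1 b = a := Equiv.swap_apply_right a b
  have e1c : σ1 c = c := Equiv.swap_apply_of_ne_of_ne hac.symm hbc.symm
  have e2a : σ2 a = a := Equiv.swap_apply_of_ne_of_ne hab hac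
  have e2b : σ2 b = c := Equiv.swap_apply_left b c
  have e2c : σ2 c = b := Equiv.swap_apply_right b c
  -- braid relation for the swaps
  have hbr : ∀ g : MvPolynomial (Fin (n + 1)) k,
      rename σ2 (rename σ1 (rename σ2 g)) = rename σ1 (rename σ2 (rename σ1 g)) := by
    intro g
    have hfun : (((σ2 : Fin (n+1) → Fin (n+1)) ∘ σ1) ∘ σ2)
        = ((σ1 : Fin (n+1) → Fin (n+1)) ∘ σ2) ∘ σ1 := by
      funext x
      simp only [Function.comp_apply]
      rcases eq_or_ne x a with rfl | hxa
      · simp only [e1a, e1b, e1c, e2a, e2b, e2c]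
      rcases eq_or_ne x b with rfl | hxb
      · simp only [e1a, e1b, e1c, e2a, e2b, e2c]
      rcases eq_or_ne x c with rfl | hxc
      · simp only [e1a, e1b, e1c, e2a, e2b, e2c]
      · have f1 : σ1 x = x := Equiv.swap_apply_of_ne_of_ne hxa hxb
        have f2 : σ2 x = x := Equiv.swap_apply_of_ne_of_ne hxb hxc
        simp only [f1, f2]
    rw [rename_rename, rename_rename, rename_rename, rename_rename, hfun]
  -- nonzero denominators
  have hXne : ∀ p q : Fin (n + 1), p ≠ q → (X p : MvPolynomial (Fin (n + 1)) k) - X q ≠ 0 :=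
    fun p q hpq => sub_ne_zero.mpr (fun h => hpq (X_injective h))
  have hM : ((X a - X b) ^ 2 * (X b - X c) ^ 2 * (X a - X c) :
      MvPolynomial (Fin (n + 1)) k) ≠ 0 :=
    mul_ne_zero (mul_ne_zero (pow_ne_zero _ (hXne a b hab)) (pow_ne_zero _ (hXne b c hbc)))
      (hXne a c hac)
  -- the fourteen linear relations
  have R1 := h1 f
  have R5 : (X a - X b) * rename σ1 (d1 f) = f - rename σ1 f := by
    have h := renKey σ1 a b _ _ _ (h1 f)
    rw [e1a, e1b, hss1] at h
    linear_combination -h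
  have R4 : (X a - X c) * rename σ2 (d1 f) = rename σ2 f - rename σ2 (rename σ1 f) := by
    have h := renKey σ2 a b _ _ _ (h1 f)
    rwa [e2a, e2b] at h
  have R7 : (X b - X c) * rename σ1 (rename σ2 (d1 f))
      = rename σ1 (rename σ2 f) - rename σ1 (rename σ2 (rename σ1 f)) := by
    have h := renKey σ2 a b _ _ _ (h1 f)
    rw [e2a, e2b] at h
    have h' := renKey σ1 a c _ _ _ h
    rwa [e1a, e1c] at h'
  have R2 : (X b - X c) * d2 (rename σ1 f - d1 f)
      = (rename σ1 f - d1 f) - (rename σ2 (rename σ1 f) - rename σ2 (d1 f)) := by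
    have h := h2 (rename σ1 f - d1 f)
    rwa [map_sub] at h
  have R6 : (X a - X c) * rename σ1 (d2 (rename σ1 f - d1 f))
      = (f - rename σ1 (d1 f))
        - (rename σ1 (rename σ2 (rename σ1 f)) - rename σ1 (rename σ2 (d1 f))) := by
    have h := renKey σ1 b c _ _ _ (h2 (rename σ1 f - d1 f))
    rw [e1b, e1c] at h
    simp only [map_sub, hss1] at h
    exact h
  have R3 : (X a - X b) * d1 (rename σ2 (rename σ1 f) - rename σ2 (d1 f)
        - d2 (rename σ1 f - d1 f))
      = (rename σ2 (rename σ1 f) - rename σ2 (d1 f) - d2 (rename σ1 f - d1 f))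
        - (rename σ1 (rename σ2 (rename σ1 f)) - rename σ1 (rename σ2 (d1 f))
          - rename σ1 (d2 (rename σ1 f - d1 f))) := by
    have h := h1 (rename σ2 (rename σ1 f) - rename σ2 (d1 f) - d2 (rename σ1 f - d1 f))
    rwa [map_sub, map_sub] at h
  have S1 := h2 f
  have S5 : (X b - X c) * rename σ2 (d2 f) = f - rename σ2 f := by
    have h := renKey σ2 b c _ _ _ (h2 f)
    rw [e2b, e2c, hss2] at h
    linear_combination -h
  have S4 : (X a - X c) * rename σ1 (d2 f) = rename σ1 f - rename σ1 (rename σ2 f) := by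
    have h := renKey σ1 b c _ _ _ (h2 f)
    rwa [e1b, e1c] at h
  have S7 : (X a - X b) * rename σ2 (rename σ1 (d2 f))
      = rename σ2 (rename σ1 f) - rename σ1 (rename σ2 (rename σ1 f)) := by
    have h := renKey σ1 b c _ _ _ (h2 f)
    rw [e1b, e1c] at h
    have h' := renKey σ2 a c _ _ _ h
    rw [e2a, e2c] at h'
    rwa [hbr] at h'
  have S2 : (X a - X b) * d1 (rename σ2 f - d2 f)
      = (rename σ2 f - d2 f) - (rename σ1 (rename σ2 f) - rename σ1 (d2 f)) := by
    have h := h1 (rename σ2 f - d2 f)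
    rwa [map_sub] at h
  have S6 : (X a - X c) * rename σ2 (d1 (rename σ2 f - d2 f))
      = (f - rename σ2 (d2 f))
        - (rename σ1 (rename σ2 (rename σ1 f)) - rename σ2 (rename σ1 (d2 f))) := by
    have h := renKey σ2 a b _ _ _ (h1 (rename σ2 f - d2 f))
    rw [e2a, e2b] at h
    simp only [map_sub, hss2, hbr] at h
    exact h
  have S3 : (X b - X c) * d2 (rename σ1 (rename σ2 f) - rename σ1 (d2 f)
        - d1 (rename σ2 f - d2 f))
      = (rename σ1 (rename σ2 f) - rename σ1 (d2 f) - d1 (rename σ2 f - d2 f))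
        - (rename σ1 (rename σ2 (rename σ1 f)) - rename σ2 (rename σ1 (d2 f))
          - rename σ2 (d1 (rename σ2 f - d2 f))) := by
    have h := h2 (rename σ1 (rename σ2 f) - rename σ1 (d2 f) - d1 (rename σ2 f - d2 f))
    rw [map_sub, map_sub] at h
    rwa [hbr] at h
  -- normalize the goal and clear denominators
  simp only [map_sub, hss1, hss2, hbr]
  refine mul_left_cancel₀ hM ?_
  linear_combination
    (-((X b - X c) * (X a - X c))) * R1
    + ((X a - X b) * (X b - X c) * (X a - X c)) * R2
    + (-((X a - X b) * (X b - X c) ^ 2 * (X a - X c))) * R3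
    + ((X a - X b) * (X b - X c) * (1 + (X b - X c))) * R4
    + ((X b - X c) ^ 2 * (1 + (X a - X b))) * R5
    + (-((X a - X b) * (X b - X c) ^ 2 * (1 + (X a - X b)))) * R6
    + (-((X a - X b) * (X b - X c) * (1 + (X a - X c)) * (1 + (X a - X b)))) * R7
    + ((X a - X b) * (X a - X c)) * S1
    + (-((X a - X b) * (X b - X c) * (X a - X c))) * S2
    + ((X a - X b) ^ 2 * (X b - X c) * (X a - X c)) * S3
    + (-((X a - X b) * (X b - X c) * (1 + (X a - X b)))) * S4
    + (-((X a - X b) ^ 2 * (1 + (X b - X c)))) * S5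
    + ((X a - X b) ^ 2 * (X b - X c) * (1 + (X b - X c))) * S6
    + ((X a - X b) * (X b - X c) * (1 + (X a - X c)) * (1 + (X b - X c))) * S7

/-- the operators `Tᵢ f = sᵢ f - ∂ᵢ f` satisfy the braid relation
`Tᵢ Tᵢ₊₁ Tᵢ = Tᵢ₊₁ Tᵢ Tᵢ₊₁`. -/
theorem T_braid {k : Type*} [Field k] {n : ℕ}
    (Dem : Fin n → MvPolynomial (Fin (n + 1)) k → MvPolynomial (Fin (n + 1)) k)
    (hDem : ∀ (i : Fin n) (f : MvPolynomial (Fin (n + 1)) k),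
      (X i.castSucc - X i.succ) * Dem i f
        = f - rename (Equiv.swap i.castSucc i.succ) f)
    (T : Fin n → MvPolynomial (Fin (n + 1)) k → MvPolynomial (Fin (n + 1)) k)
    (hT : ∀ (i : Fin n) (f : MvPolynomial (Fin (n + 1)) k),
      T i f = rename (Equiv.swap i.castSucc i.succ) f - Dem i f)
    (i j : Fin n) (hij : (j : ℕ) = (i : ℕ) + 1)
    (f : MvPolynomial (Fin (n + 1)) k) :
    T i (T j (T i f)) = T j (T i (T j f)) := by
  have hjb : j.castSucc = i.succ := by
    apply Fin.ext
    simp [hij]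
  have hab : i.castSucc ≠ i.succ := by
    simp only [Ne, Fin.ext_iff, Fin.coe_castSucc, Fin.val_succ]
    omega
  have hbc : i.succ ≠ j.succ := by
    simp only [Ne, Fin.ext_iff, Fin.val_succ]
    omega
  have hac : i.castSucc ≠ j.succ := by
    simp only [Ne, Fin.ext_iff, Fin.coe_castSucc, Fin.val_succ]
    omega
  have h2 : ∀ g, (X (i.succ) - X (j.succ)) * Dem j g
      = g - rename (Equiv.swap i.succ j.succ) g := by
    intro g
    have := hDem j g
    rwa [hjb] at this
  simp only [hT, hjb]
  exact T_braid_aux i.castSucc i.succ j.succ hab hbc hac (Dem i) (Dem j)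
    (fun g => hDem i g) h2 f
end

section
/- Fix q in k nonzero. The operators T_i(f) = q·s_i(f) - (q-1)·X_{i+1}·∂_i(f) on k[X_1^{±1},...,X_d^{±1}] satisfy the affine Hecke relation T_i∘X_i∘T_i = q·X_{i+1}, where X_j denotes multiplication by X_j. -/
/-- The Laurent polynomial ring `k[X₁^{±1},…,X_d^{±1}]`, realized as the group
algebra of `Fin d →₀ ℤ` over `k`. -/
abbrev LaurentPol (k : Type*) [Field k] (d : ℕ) : Type _ :=
  AddMonoidAlgebra k (Fin d →₀ ℤ)

/-- The Laurent variable `X_j`. -/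
noncomputable def LX {k : Type*} [Field k] {d : ℕ} (j : Fin d) : LaurentPol k d :=
  AddMonoidAlgebra.single (Finsupp.single j 1) 1

/-- The algebra automorphism `sᵢ` of the Laurent polynomial ring swapping
`Xᵢ` and `Xᵢ₊₁`. -/
noncomputable def Lsw (k : Type*) [Field k] {n : ℕ} (i : Fin n) :
    LaurentPol k (n + 1) ≃ₐ[k] LaurentPol k (n + 1) :=
  AddMonoidAlgebra.domCongr k k (Finsupp.domCongr (Equiv.swap i.castSucc i.succ))

/-- the affine Hecke relation `Tᵢ ∘ Xᵢ ∘ Tᵢ = q·Xᵢ₊₁`. -/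
theorem laurentT_affine_Hecke {k : Type*} [Field k] {n : ℕ} (q : k) (hq : q ≠ 0)
    (Dem : Fin n → LaurentPol k (n + 1) → LaurentPol k (n + 1))
    (hDem : ∀ (i : Fin n) (f : LaurentPol k (n + 1)),
      (LX i.castSucc - LX i.succ) * Dem i f = f - Lsw k i f)
    (T : Fin n → LaurentPol k (n + 1) → LaurentPol k (n + 1))
    (hT : ∀ (i : Fin n) (f : LaurentPol k (n + 1)),
      T i f = q • Lsw k i f - (q - 1) • (LX i.succ * Dem i f))
    (i : Fin n) (f : LaurentPol k (n + 1)) :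
    T i (LX i.castSucc * T i f) = q • (LX i.succ * f) := by
  classical
  set s := Lsw k i with hs
  set a : LaurentPol k (n+1) := LX i.castSucc with hadef
  set b : LaurentPol k (n+1) := LX i.succ with hbdef
  have hne : (i.castSucc : Fin (n+1)) ≠ i.succ := (Fin.castSucc_lt_succ (i := i)).ne
  have hab : a - b ≠ 0 := by
    rw [sub_ne_zero]
    intro h
    apply hne
    have h2 : Finsupp.single (i.castSucc : Fin (n+1)) (1:ℤ) = Finsupp.single i.succ 1 :=
      AddMonoidAlgebra.single_left_injective (r := (1:k)) one_ne_zero h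
    exact Finsupp.single_left_injective (b := (1:ℤ)) one_ne_zero h2
  have hsa : s a = b := by
    simp [hs, Lsw, hadef, hbdef, LX, AddMonoidAlgebra.domCongr_single,
      Finsupp.domCongr_apply, Finsupp.equivMapDomain_single]
  have hsb : s b = a := by
    simp [hs, Lsw, hadef, hbdef, LX, AddMonoidAlgebra.domCongr_single,
      Finsupp.domCongr_apply, Finsupp.equivMapDomain_single]
  have hsymm : s.symm = s := by
    rw [hs, Lsw, AddMonoidAlgebra.domCongr_symm]
    congr 1
  have hinv : ∀ g, s (s g) = g := fun g => by
    nth_rewrite 1 [← hsymm]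
    exact s.symm_apply_apply g
  set Q : LaurentPol k (n+1) := algebraMap k (LaurentPol k (n+1)) q with hQdef
  have hQ : ∀ x : LaurentPol k (n+1), q • x = Q * x := fun x => Algebra.smul_def q x
  have hQ1 : ∀ x : LaurentPol k (n+1), (q-1) • x = (Q - 1) * x := fun x => by
    rw [Algebra.smul_def, map_sub, map_one]
  set D := Dem i f with hD
  have h1 : (a - b) * D = f - s f := hDem i f
  have hsD : s D = D := by
    apply mul_left_cancel₀ hab
    have h1' := congrArg s h1
    rw [map_mul, map_sub, map_sub, hsa, hsb, hinv] at h1'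
    rw [h1]
    linear_combination -h1'
  have hTf : T i f = Q * s f - (Q-1) * (b * D) := by
    rw [hT i f, hQ, hQ1]
  have hsT : s (T i f) = Q * f - (Q-1) * (a * D) := by
    rw [hT i f, map_sub, map_smul, map_smul, map_mul, hsb, hinv, hsD, hQ, hQ1]
  set D2 := Dem i (a * T i f) with hD2
  have h2 : (a - b) * D2 = a * T i f - b * (Q * f - (Q-1)*(a*D)) := by
    have h := hDem i (a * T i f)
    rwa [map_mul, hsa, hsT] at h
  rw [hTf] at h2
  rw [hT i (a * T i f), map_mul, hsa, hsT, hQ, hQ1, hQ]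
  apply mul_left_cancel₀ hab
  linear_combination (-(Q*(Q-1)*a*b)) * h1 - ((Q-1)*b) * h2
end

section
/- In the DG-enhanced degenerate affine Hecke algebra H̄_d-bar, define ξ_1 = θ and ξ_{i+1} = T_i ξ_i T_i. Then for all r and ℓ: ξ_ℓ² = 0, ξ_r ξ_ℓ + ξ_ℓ ξ_r = 0, and T_r ξ_ℓ = ξ_{s_r(ℓ)} T_r, where s_r(ℓ) applies the transposition (r, r+1) to the index ℓ. -/
/-- in (any algebra with the relations of) the DG-enhanced degenerate
affine Hecke algebra, with `ξ₁ = θ` and `ξᵢ₊₁ = Tᵢ ξᵢ Tᵢ`, one has `ξₗ² = 0`,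
`ξᵣ ξₗ + ξₗ ξᵣ = 0`, and `Tᵣ ξₗ = ξ_{sᵣ(ℓ)} Tᵣ`. -/
theorem dg_degenerate_Hecke_xi_relations {k : Type*} [Field k] {n : ℕ}
    {A : Type*} [Ring A] [Algebra k A]
    (T : Fin n → A) (Xv : Fin (n + 1) → A) (θ : A)
    -- degenerate affine Hecke relations
    (hT2 : ∀ i : Fin n, T i * T i = 1)
    (hTTcomm : ∀ i j : Fin n, (i : ℕ) + 1 < (j : ℕ) → T i * T j = T j * T i)
    (hbraid : ∀ i j : Fin n, (j : ℕ) = (i : ℕ) + 1 →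
      T i * T j * T i = T j * T i * T j)
    (hXX : ∀ r s : Fin (n + 1), Xv r * Xv s = Xv s * Xv r)
    (hTX : ∀ i : Fin n, T i * Xv i.castSucc - Xv i.succ * T i = -1)
    (hTXcomm : ∀ (i : Fin n) (r : Fin (n + 1)),
      r ≠ i.castSucc → r ≠ i.succ → T i * Xv r = Xv r * T i)
    -- relations involving the extra degree-1 generator θ
    (hθ2 : θ * θ = 0)
    (hXθ : ∀ r : Fin (n + 1), Xv r * θ = θ * Xv r)
    (hTθ : ∀ i : Fin n, (i : ℕ) ≠ 0 → T i * θ = θ * T i)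
    (hT1θ : ∀ i : Fin n, (i : ℕ) = 0 →
      T i * θ * T i * θ + θ * T i * θ * T i = 0)
    (xi : Fin (n + 1) → A)
    (hxi0 : ∀ ℓ : Fin (n + 1), (ℓ : ℕ) = 0 → xi ℓ = θ)
    (hxiS : ∀ i : Fin n, xi i.succ = T i * xi i.castSucc * T i) :
    (∀ ℓ : Fin (n + 1), xi ℓ * xi ℓ = 0) ∧
    (∀ r ℓ : Fin (n + 1), xi r * xi ℓ + xi ℓ * xi r = 0) ∧
    (∀ (r : Fin n) (ℓ : Fin (n + 1)),
      T r * xi ℓ = xi (Equiv.swap r.castSucc r.succ ℓ) * T r) := by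
  -- the conjugation operators
  set C : Fin n → A → A := fun i x => T i * x * T i with hC
  have hCmul : ∀ (i : Fin n) (x y : A), C i x * C i y = C i (x * y) := by
    intro i x y
    show T i * x * T i * (T i * y * T i) = T i * (x * y) * T i
    have : T i * x * T i * (T i * y * T i) = T i * x * (T i * T i) * y * T i := by
      simp only [mul_assoc]
    rw [this, hT2, mul_one]; simp only [mul_assoc]
  have hCadd : ∀ (i : Fin n) (x y : A), C i (x + y) = C i x + C i y := by
    intro i x y
    show T i * (x + y) * T i = T i * x * T i + T i * y * T i
    rw [mul_add, add_mul]
  have hC0 : ∀ i : Fin n, C i (0 : A) = 0 := by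
    intro i; show T i * 0 * T i = 0; rw [mul_zero, zero_mul]
  have hCcomm : ∀ (i : Fin n) (x : A), C i x = x → T i * x = x * T i := by
    intro i x h
    have h' : T i * x * T i = x := h
    calc T i * x = T i * x * T i * T i := by
          rw [mul_assoc (T i * x), hT2, mul_one]
      _ = x * T i := by rw [h']
  have hCbraid : ∀ (i j : Fin n), (j : ℕ) = (i : ℕ) + 1 → ∀ x : A,
      C i (C j (C i x)) = C j (C i (C j x)) := by
    intro i j hij x
    show T i * (T j * (T i * x * T i) * T j) * T i
        = T j * (T i * (T j * x * T j) * T i) * T j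
    have e : ∀ u v : A, u * (v * (u * x * u) * v) * u = (u * v * u) * x * (u * v * u) := by
      intro u v; simp only [mul_assoc]
    rw [e, e, hbraid i j hij]
  have hCfar : ∀ (i j : Fin n), (i : ℕ) + 1 < (j : ℕ) → ∀ x : A,
      C i (C j x) = C j (C i x) := by
    intro i j hij x
    show T i * (T j * x * T j) * T i = T j * (T i * x * T i) * T j
    have e : ∀ u v : A, u * (v * x * v) * u = (u * v) * x * (v * u) := by
      intro u v; simp only [mul_assoc]
    rw [e, e, hTTcomm i j hij]
  -- recursion in mk form
  have hxiS' : ∀ (m : ℕ) (hm : m < n) (h1 : m + 1 < n + 1) (h0 : m < n + 1),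
      xi ⟨m + 1, h1⟩ = C ⟨m, hm⟩ (xi ⟨m, h0⟩) := by
    intro m hm h1 h0
    have := hxiS ⟨m, hm⟩
    rwa [Fin.succ_mk, Fin.castSucc_mk] at this
  -- T r commutes with ξ_ℓ whenever ℓ ∉ {r, r+1}
  have hfix : ∀ (m : ℕ) (hm : m < n + 1) (r : Fin n),
      (r : ℕ) ≠ m → (r : ℕ) + 1 ≠ m → C r (xi ⟨m, hm⟩) = xi ⟨m, hm⟩ := by
    intro m
    induction m using Nat.strong_induction_on with
    | _ m IH =>
      intro hm r hr1 hr2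
      match m, hm with
      | 0, hm =>
        rw [hxi0 ⟨0, hm⟩ rfl]
        show T r * θ * T r = θ
        rw [hTθ r hr1, mul_assoc, hT2, mul_one]
      | (m + 1), hm =>
        have hmn : m < n := by omega
        have hrec := hxiS' m hmn hm (by omega)
        rcases (by omega : (r : ℕ) + 1 = m ∨ (r : ℕ) + 1 < m ∨ m + 1 < (r : ℕ)) with h | h | h
        · -- braid case : r = m - 1
          subst h
          have hrec2 : xi ⟨(r : ℕ) + 1, by omega⟩
              = C ⟨(r : ℕ), by omega⟩ (xi ⟨(r : ℕ), by omega⟩) :=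
            hxiS' (r : ℕ) (by omega) (by omega) (by omega)
          simp only [Fin.eta] at hrec2
          have hfix2 : C ⟨(r : ℕ) + 1, hmn⟩ (xi ⟨(r : ℕ), by omega⟩)
              = xi ⟨(r : ℕ), by omega⟩ :=
            IH (r : ℕ) (by omega) (by omega) ⟨(r : ℕ) + 1, hmn⟩
              (show (r : ℕ) + 1 ≠ (r : ℕ) by omega)
              (show (r : ℕ) + 1 + 1 ≠ (r : ℕ) by omega)
          rw [hrec, hrec2,
            hCbraid r ⟨(r : ℕ) + 1, hmn⟩ (show (r : ℕ) + 1 = (r : ℕ) + 1 from rfl),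
            hfix2]
        · -- r + 1 < m
          rw [hrec, hCfar r ⟨m, hmn⟩ h,
            IH m (by omega) (by omega) r (by omega) (by omega)]
        · -- r > m + 1
          rw [hrec, ← hCfar ⟨m, hmn⟩ r h,
            IH m (by omega) (by omega) r (by omega) (by omega)]
  have hfix' : ∀ (ℓ : Fin (n + 1)) (r : Fin n),
      (r : ℕ) ≠ (ℓ : ℕ) → (r : ℕ) + 1 ≠ (ℓ : ℕ) → C r (xi ℓ) = xi ℓ := by
    intro ℓ r h1 h2
    have := hfix (ℓ : ℕ) ℓ.isLt r h1 h2
    simpa using this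
  -- squares vanish
  have hsq : ∀ (m : ℕ) (hm : m < n + 1), xi ⟨m, hm⟩ * xi ⟨m, hm⟩ = 0 := by
    intro m
    induction m with
    | zero => intro hm; rw [hxi0 ⟨0, hm⟩ rfl]; exact hθ2
    | succ m IH =>
      intro hm
      have hmn : m < n := by omega
      rw [hxiS' m hmn hm (by omega), hCmul, IH (by omega), hC0]
  -- adjacent anticommutation
  have hadj : ∀ (m : ℕ) (hm : m + 1 < n + 1) (h0 : m < n + 1),
      xi ⟨m, h0⟩ * xi ⟨m + 1, hm⟩ + xi ⟨m + 1, hm⟩ * xi ⟨m, h0⟩ = 0 := by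
    intro m
    induction m with
    | zero =>
      intro hm h0
      have h0n : (0 : ℕ) < n := by omega
      rw [hxiS' 0 h0n hm h0, hxi0 ⟨0, h0⟩ rfl]
      show θ * (T ⟨0, h0n⟩ * θ * T ⟨0, h0n⟩) + T ⟨0, h0n⟩ * θ * T ⟨0, h0n⟩ * θ = 0
      rw [show θ * (T ⟨0, h0n⟩ * θ * T ⟨0, h0n⟩) = θ * T ⟨0, h0n⟩ * θ * T ⟨0, h0n⟩ by
        simp only [mul_assoc], add_comm]
      exact hT1θ ⟨0, h0n⟩ rfl
    | succ m IH =>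
      intro hm h0
      have hmn : m < n := by omega
      have hm1n : m + 1 < n := by omega
      have h00 : m < n + 1 := by omega
      set i : Fin n := ⟨m, hmn⟩ with hi
      set j : Fin n := ⟨m + 1, hm1n⟩ with hj
      have e1 : xi ⟨m + 1, h0⟩ = C i (xi ⟨m, h00⟩) := hxiS' m hmn h0 h00
      have e2 : xi ⟨m + 2, hm⟩ = C j (xi ⟨m + 1, h0⟩) := hxiS' (m + 1) hm1n hm h0
      have f1 : C j (xi ⟨m, h00⟩) = xi ⟨m, h00⟩ :=
        hfix m h00 j (show m + 1 ≠ m by omega) (show m + 1 + 1 ≠ m by omega)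
      have f2 : C i (xi ⟨m + 2, hm⟩) = xi ⟨m + 2, hm⟩ :=
        hfix (m + 2) hm i (show m ≠ m + 2 by omega) (show m + 1 ≠ m + 2 by omega)
      have s1 : C j (xi ⟨m, h00⟩ * xi ⟨m + 1, h0⟩ + xi ⟨m + 1, h0⟩ * xi ⟨m, h00⟩)
          = xi ⟨m, h00⟩ * xi ⟨m + 2, hm⟩ + xi ⟨m + 2, hm⟩ * xi ⟨m, h00⟩ := by
        rw [hCadd, ← hCmul j (xi ⟨m, h00⟩) (xi ⟨m + 1, h0⟩),
          ← hCmul j (xi ⟨m + 1, h0⟩) (xi ⟨m, h00⟩), f1, ← e2]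
      have s2 : C i (xi ⟨m, h00⟩ * xi ⟨m + 2, hm⟩ + xi ⟨m + 2, hm⟩ * xi ⟨m, h00⟩)
          = xi ⟨m + 1, h0⟩ * xi ⟨m + 2, hm⟩ + xi ⟨m + 2, hm⟩ * xi ⟨m + 1, h0⟩ := by
        rw [hCadd, ← hCmul i (xi ⟨m, h00⟩) (xi ⟨m + 2, hm⟩),
          ← hCmul i (xi ⟨m + 2, hm⟩) (xi ⟨m, h00⟩), f2, ← e1]
      calc xi ⟨m + 1, h0⟩ * xi ⟨m + 2, hm⟩ + xi ⟨m + 2, hm⟩ * xi ⟨m + 1, h0⟩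
          = C i (xi ⟨m, h00⟩ * xi ⟨m + 2, hm⟩ + xi ⟨m + 2, hm⟩ * xi ⟨m, h00⟩) := s2.symm
        _ = C i (C j (xi ⟨m, h00⟩ * xi ⟨m + 1, h0⟩ + xi ⟨m + 1, h0⟩ * xi ⟨m, h00⟩)) := by
            rw [s1]
        _ = 0 := by rw [IH h0 h00, hC0, hC0]
  -- general anticommutation for r < ℓ
  have hanti : ∀ (l : ℕ) (hl : l < n + 1) (r : ℕ) (hr : r < n + 1), r < l →
      xi ⟨r, hr⟩ * xi ⟨l, hl⟩ + xi ⟨l, hl⟩ * xi ⟨r, hr⟩ = 0 := by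
    intro l
    induction l using Nat.strong_induction_on with
    | _ l IH =>
      intro hl r hr hrl
      match l, hl, hrl with
      | (m + 1), hl, hrl =>
        rcases (by omega : r = m ∨ r < m) with h | h
        · subst h; exact hadj r hl hr
        · have hmn : m < n := by omega
          have h00 : m < n + 1 := by omega
          set p : Fin n := ⟨m, hmn⟩ with hp
          have e : xi ⟨m + 1, hl⟩ = C p (xi ⟨m, h00⟩) := hxiS' m hmn hl h00
          have f : C p (xi ⟨r, hr⟩) = xi ⟨r, hr⟩ :=
            hfix r hr p (show m ≠ r by omega) (show m + 1 ≠ r by omega)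
          have s : C p (xi ⟨r, hr⟩ * xi ⟨m, h00⟩ + xi ⟨m, h00⟩ * xi ⟨r, hr⟩)
              = xi ⟨r, hr⟩ * xi ⟨m + 1, hl⟩ + xi ⟨m + 1, hl⟩ * xi ⟨r, hr⟩ := by
            rw [hCadd, ← hCmul p (xi ⟨r, hr⟩) (xi ⟨m, h00⟩),
              ← hCmul p (xi ⟨m, h00⟩) (xi ⟨r, hr⟩), f, ← e]
          rw [← s, IH m (by omega) h00 r hr h, hC0]
  refine ⟨?_, ?_, ?_⟩
  · intro ℓ
    have := hsq (ℓ : ℕ) ℓ.isLt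
    simpa using this
  · intro r ℓ
    rcases (by omega : (r : ℕ) < (ℓ : ℕ) ∨ (ℓ : ℕ) < (r : ℕ) ∨ (r : ℕ) = (ℓ : ℕ)) with h | h | h
    · have := hanti (ℓ : ℕ) ℓ.isLt (r : ℕ) r.isLt h
      simpa using this
    · have := hanti (r : ℕ) r.isLt (ℓ : ℕ) ℓ.isLt h
      rw [add_comm] at this
      simpa using this
    · have hrl : r = ℓ := Fin.ext h
      subst hrl
      have := hsq (r : ℕ) r.isLt
      simp only [Fin.eta] at this
      rw [this, add_zero]
  · intro r ℓ
    rcases (by omega : (ℓ : ℕ) = (r : ℕ) ∨ (ℓ : ℕ) = (r : ℕ) + 1 ∨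
        ((ℓ : ℕ) ≠ (r : ℕ) ∧ (ℓ : ℕ) ≠ (r : ℕ) + 1)) with h | h | ⟨h1, h2⟩
    · have hℓ : ℓ = r.castSucc := Fin.ext (by simpa using h)
      subst hℓ
      rw [Equiv.swap_apply_left, hxiS r]
      rw [mul_assoc (T r * xi r.castSucc), hT2, mul_one]
    · have hℓ : ℓ = r.succ := Fin.ext (by simpa using h)
      subst hℓ
      rw [Equiv.swap_apply_right, hxiS r, ← mul_assoc, ← mul_assoc, hT2, one_mul]
    · have hswap : Equiv.swap r.castSucc r.succ ℓ = ℓ := by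
        apply Equiv.swap_apply_of_ne_of_ne
        · intro hc; apply h1; rw [hc]; simp
        · intro hc; apply h2; rw [hc]; simp
      rw [hswap]
      exact hCcomm r (xi ℓ) (hfix' ℓ r (fun hc => h1 hc.symm) (fun hc => h2 hc.symm))
end

section
/- In the DG-enhanced affine q-Hecke algebra H_d-cal (q ≠ 0, 1), define ξ_1 = θ and ξ_{i+1} = T_i ξ_i T_i^{-1}. Then ξ_ℓ² = 0 and ξ_r ξ_ℓ + ξ_ℓ ξ_r = 0 for all r, ℓ, and the commutation rules hold: T_ℓ ξ_r = ξ_r T_ℓ if r ≠ ℓ, ℓ+1; T_ℓ ξ_{ℓ+1} = ξ_ℓ T_ℓ + (q-1)(ξ_{ℓ+1} - ξ_ℓ); and T_ℓ ξ_ℓ = ξ_{ℓ+1} T_ℓ. -/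
/-- in (any algebra with the relations of) the DG-enhanced affine
`q`-Hecke algebra (`q ≠ 0, 1`), with `ξ₁ = θ` and `ξᵢ₊₁ = Tᵢ ξᵢ Tᵢ⁻¹` (the `Tᵢ`
are invertible since `(Tᵢ - q)(Tᵢ + 1) = 0` with `q ≠ 0`), one has `ξₗ² = 0`,
`ξᵣ ξₗ + ξₗ ξᵣ = 0`, and the commutation rules: `Tₗ ξᵣ = ξᵣ Tₗ` for
`r ≠ ℓ, ℓ+1`; `Tₗ ξₗ₊₁ = ξₗ Tₗ + (q-1)(ξₗ₊₁ - ξₗ)`; `Tₗ ξₗ = ξₗ₊₁ Tₗ`. -/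
theorem dg_q_Hecke_xi_relations {k : Type*} [Field k] {n : ℕ} (q : k) (hq0 : q ≠ 0) (hq1 : q ≠ 1)
    {A : Type*} [Ring A] [Algebra k A]
    (T : Fin n → A) (Xv Xinv : Fin (n + 1) → A) (θ : A)
    -- affine q-Hecke relations
    (hXinv : ∀ r : Fin (n + 1), Xv r * Xinv r = 1 ∧ Xinv r * Xv r = 1)
    (hXX : ∀ r s : Fin (n + 1), Xv r * Xv s = Xv s * Xv r)
    (hT2 : ∀ i : Fin n, (T i - q • 1) * (T i + 1) = 0)
    (hTTcomm : ∀ i j : Fin n, (i : ℕ) + 1 < (j : ℕ) → T i * T j = T j * T i)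
    (hbraid : ∀ i j : Fin n, (j : ℕ) = (i : ℕ) + 1 →
      T i * T j * T i = T j * T i * T j)
    (hTXT : ∀ i : Fin n, T i * Xv i.castSucc * T i = q • Xv i.succ)
    (hTXcomm : ∀ (i : Fin n) (r : Fin (n + 1)),
      r ≠ i.castSucc → r ≠ i.succ → T i * Xv r = Xv r * T i)
    -- relations involving the extra degree-1 generator θ
    (hθ2 : θ * θ = 0)
    (hXθ : ∀ r : Fin (n + 1), Xv r * θ = θ * Xv r)
    (hXinvθ : ∀ r : Fin (n + 1), Xinv r * θ = θ * Xinv r)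
    (hTθ : ∀ i : Fin n, (i : ℕ) ≠ 0 → T i * θ = θ * T i)
    (hT1θ : ∀ i : Fin n, (i : ℕ) = 0 →
      T i * θ * T i * θ + θ * T i * θ * T i = (q - 1) • (θ * T i * θ))
    (Tinv : Fin n → A)
    (hTinv : ∀ i : Fin n, T i * Tinv i = 1 ∧ Tinv i * T i = 1)
    (xi : Fin (n + 1) → A)
    (hxi0 : ∀ ℓ : Fin (n + 1), (ℓ : ℕ) = 0 → xi ℓ = θ)
    (hxiS : ∀ i : Fin n, xi i.succ = T i * xi i.castSucc * Tinv i) :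
    (∀ ℓ : Fin (n + 1), xi ℓ * xi ℓ = 0) ∧
    (∀ r ℓ : Fin (n + 1), xi r * xi ℓ + xi ℓ * xi r = 0) ∧
    (∀ (ℓ : Fin n) (r : Fin (n + 1)), r ≠ ℓ.castSucc → r ≠ ℓ.succ →
      T ℓ * xi r = xi r * T ℓ) ∧
    (∀ ℓ : Fin n, T ℓ * xi ℓ.succ
      = xi ℓ.castSucc * T ℓ + (q - 1) • (xi ℓ.succ - xi ℓ.castSucc)) ∧
    (∀ ℓ : Fin n, T ℓ * xi ℓ.castSucc = xi ℓ.succ * T ℓ) := by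
  
  -- ------- basic consequences of the Hecke relations -------
  have hcancel : ∀ x : A, q • x = 0 → x = 0 := by
    intro x hx
    have h := congrArg (fun y => q⁻¹ • y) hx
    simpa [smul_smul, inv_mul_cancel₀ hq0] using h
  have hTsq : ∀ i : Fin n, T i * T i = (q - 1) • T i + q • 1 := by
    intro i
    have h := hT2 i
    simp only [sub_mul, mul_add, mul_one, smul_mul_assoc, one_mul] at h
    rw [sub_smul, one_smul]
    have h3 : T i * T i - ((q • T i - T i) + q • 1) = 0 := by rw [← h]; abel
    exact sub_eq_zero.mp h3
  have hqTinv : ∀ i : Fin n, q • Tinv i = T i - (q - 1) • 1 := by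
    intro i
    have h := congrArg (· * Tinv i) (hTsq i)
    simp only [add_mul, smul_mul_assoc, mul_assoc, (hTinv i).1, mul_one, one_mul] at h
    rw [h]; abel
  have lcancel : ∀ (i : Fin n) {x y : A}, T i * x = T i * y → x = y := by
    intro i x y h
    have h2 := congrArg (fun z => Tinv i * z) h
    simpa only [← mul_assoc, (hTinv i).2, one_mul] using h2
  have rcancel : ∀ (i : Fin n) {x y : A}, x * T i = y * T i → x = y := by
    intro i x y h
    have h2 := congrArg (fun z => z * Tinv i) h
    simpa only [mul_assoc, (hTinv i).1, mul_one] using h2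
  have hTinvComm : ∀ (i : Fin n) (a : A), T i * a = a * T i → Tinv i * a = a * Tinv i := by
    intro i a h
    calc Tinv i * a = Tinv i * a * (T i * Tinv i) := by rw [(hTinv i).1, mul_one]
      _ = Tinv i * (a * T i) * Tinv i := by noncomm_ring
      _ = Tinv i * (T i * a) * Tinv i := by rw [h]
      _ = (Tinv i * T i) * (a * Tinv i) := by noncomm_ring
      _ = a * Tinv i := by rw [(hTinv i).2, one_mul]
  -- ------- squares vanish -------
  have hsq : ∀ r : Fin (n + 1), xi r * xi r = 0 := by
    intro r
    induction r using Fin.induction with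
    | zero => rw [hxi0 0 (by simp)]; exact hθ2
    | succ i ih =>
      rw [hxiS i]
      calc T i * xi i.castSucc * Tinv i * (T i * xi i.castSucc * Tinv i)
          = T i * (xi i.castSucc * ((Tinv i * T i) * xi i.castSucc)) * Tinv i := by noncomm_ring
        _ = 0 := by rw [(hTinv i).2, one_mul, ih, mul_zero, zero_mul]
  -- ------- commutation of T with far xi -------
  have hcomm : ∀ (r : Fin (n + 1)) (ℓ : Fin n), r ≠ ℓ.castSucc → r ≠ ℓ.succ →
      T ℓ * xi r = xi r * T ℓ := by
    have main : ∀ m : ℕ, ∀ r : Fin (n + 1), (r : ℕ) = m →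
        ∀ ℓ : Fin n, r ≠ ℓ.castSucc → r ≠ ℓ.succ → T ℓ * xi r = xi r * T ℓ := by
      intro m
      induction m using Nat.strong_induction_on with
      | _ m IH =>
        intro r
        induction r using Fin.cases with
        | zero =>
          intro hr ℓ h1 h2
          rw [hxi0 0 (by simp)]
          refine hTθ ℓ ?_
          intro h0
          exact h1 (Fin.ext (by simp [h0]))
        | succ i =>
          intro hr ℓ h1 h2
          have hvi : (i : ℕ) + 1 = m := by simpa using hr
          have hne1 : (i : ℕ) + 1 ≠ (ℓ : ℕ) := by
            intro h; exact h1 (Fin.ext (by simp [h]))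
          have hne2 : (i : ℕ) ≠ (ℓ : ℕ) := by
            intro h; exact h2 (Fin.ext (by simp [h]))
          rw [hxiS i]
          rcases lt_trichotomy ((ℓ : ℕ) + 1) (i : ℕ) with hlt | heq | hgt
          · -- far apart : ℓ + 1 < i
            have hTT : T ℓ * T i = T i * T ℓ := hTTcomm ℓ i hlt
            have hxC : T ℓ * xi i.castSucc = xi i.castSucc * T ℓ := by
              refine IH (i : ℕ) (by omega) i.castSucc (by simp) ℓ ?_ ?_
              · intro h; have := congrArg Fin.val h; simp at this; omega
              · intro h; have := congrArg Fin.val h; simp at this; omega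
            have hTiv : T ℓ * Tinv i = Tinv i * T ℓ := (hTinvComm i (T ℓ) hTT.symm).symm
            calc T ℓ * (T i * xi i.castSucc * Tinv i)
                = (T ℓ * T i) * xi i.castSucc * Tinv i := by noncomm_ring
              _ = (T i * T ℓ) * xi i.castSucc * Tinv i := by rw [hTT]
              _ = T i * (T ℓ * xi i.castSucc) * Tinv i := by noncomm_ring
              _ = T i * (xi i.castSucc * T ℓ) * Tinv i := by rw [hxC]
              _ = T i * xi i.castSucc * (T ℓ * Tinv i) := by noncomm_ring
              _ = T i * xi i.castSucc * (Tinv i * T ℓ) := by rw [hTiv]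
              _ = T i * xi i.castSucc * Tinv i * T ℓ := by noncomm_ring
          · -- braid case : i = ℓ + 1
            have hbr := hbraid ℓ i (by omega)
            have hII : Tinv i * T ℓ * T i = T ℓ * T i * Tinv ℓ := by
              apply lcancel i; apply rcancel ℓ
              calc T i * (Tinv i * T ℓ * T i) * T ℓ
                  = (T i * Tinv i) * (T ℓ * T i * T ℓ) := by noncomm_ring
                _ = T ℓ * T i * T ℓ := by rw [(hTinv i).1, one_mul]
                _ = T i * T ℓ * T i := hbr
                _ = T i * (T ℓ * T i * Tinv ℓ) * T ℓ := by
                    have h5 : T i * (T ℓ * T i * Tinv ℓ) * T ℓ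
                        = (T i * T ℓ * T i) * (Tinv ℓ * T ℓ) := by noncomm_ring
                    rw [h5, (hTinv ℓ).2, mul_one]
            have hK : T i * (Tinv ℓ * Tinv i) = (Tinv ℓ * Tinv i) * T ℓ := by
              apply lcancel ℓ; apply rcancel i
              calc T ℓ * (T i * (Tinv ℓ * Tinv i)) * T i
                  = (T ℓ * T i * Tinv ℓ) * (Tinv i * T i) := by noncomm_ring
                _ = T ℓ * T i * Tinv ℓ := by rw [(hTinv i).2, mul_one]
                _ = Tinv i * T ℓ * T i := hII.symm
                _ = T ℓ * ((Tinv ℓ * Tinv i) * T ℓ) * T i := by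
                    have h5 : T ℓ * ((Tinv ℓ * Tinv i) * T ℓ) * T i
                        = (T ℓ * Tinv ℓ) * (Tinv i * (T ℓ * T i)) := by noncomm_ring
                    rw [h5, (hTinv ℓ).1, one_mul, ← mul_assoc]
            have hbx : T i * xi ℓ.castSucc = xi ℓ.castSucc * T i := by
              refine IH (ℓ : ℕ) (by omega) ℓ.castSucc (by simp) i ?_ ?_
              · intro h; have := congrArg Fin.val h; simp at this; omega
              · intro h; have := congrArg Fin.val h; simp at this; omega
            have e2 : xi i.castSucc = T ℓ * xi ℓ.castSucc * Tinv ℓ := by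
              have hcs : i.castSucc = ℓ.succ := Fin.ext (by simp; omega)
              rw [hcs, hxiS ℓ]
            rw [e2]
            calc T ℓ * (T i * (T ℓ * xi ℓ.castSucc * Tinv ℓ) * Tinv i)
                = (T ℓ * T i * T ℓ) * xi ℓ.castSucc * (Tinv ℓ * Tinv i) := by noncomm_ring
              _ = (T i * T ℓ * T i) * xi ℓ.castSucc * (Tinv ℓ * Tinv i) := by rw [hbr]
              _ = (T i * T ℓ) * (T i * xi ℓ.castSucc) * (Tinv ℓ * Tinv i) := by noncomm_ring
              _ = (T i * T ℓ) * (xi ℓ.castSucc * T i) * (Tinv ℓ * Tinv i) := by rw [hbx]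
              _ = (T i * T ℓ * xi ℓ.castSucc) * (T i * (Tinv ℓ * Tinv i)) := by noncomm_ring
              _ = (T i * T ℓ * xi ℓ.castSucc) * ((Tinv ℓ * Tinv i) * T ℓ) := by rw [hK]
              _ = T i * (T ℓ * xi ℓ.castSucc * Tinv ℓ) * Tinv i * T ℓ := by noncomm_ring
          · -- far apart : i + 1 < ℓ
            have hil : (i : ℕ) + 1 < (ℓ : ℕ) := by omega
            have hTT : T ℓ * T i = T i * T ℓ := (hTTcomm i ℓ hil).symm
            have hxC : T ℓ * xi i.castSucc = xi i.castSucc * T ℓ := by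
              refine IH (i : ℕ) (by omega) i.castSucc (by simp) ℓ ?_ ?_
              · intro h; have := congrArg Fin.val h; simp at this; omega
              · intro h; have := congrArg Fin.val h; simp at this; omega
            have hTiv : T ℓ * Tinv i = Tinv i * T ℓ := (hTinvComm i (T ℓ) hTT.symm).symm
            calc T ℓ * (T i * xi i.castSucc * Tinv i)
                = (T ℓ * T i) * xi i.castSucc * Tinv i := by noncomm_ring
              _ = (T i * T ℓ) * xi i.castSucc * Tinv i := by rw [hTT]
              _ = T i * (T ℓ * xi i.castSucc) * Tinv i := by noncomm_ring
              _ = T i * (xi i.castSucc * T ℓ) * Tinv i := by rw [hxC]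
              _ = T i * xi i.castSucc * (T ℓ * Tinv i) := by noncomm_ring
              _ = T i * xi i.castSucc * (Tinv i * T ℓ) := by rw [hTiv]
              _ = T i * xi i.castSucc * Tinv i * T ℓ := by noncomm_ring
    intro r ℓ h1 h2; exact main (r : ℕ) r rfl ℓ h1 h2
  -- ------- T ℓ * ξ_ℓ = ξ_{ℓ+1} * T ℓ -------
  have hTe : ∀ ℓ : Fin n, T ℓ * xi ℓ.castSucc = xi ℓ.succ * T ℓ := by
    intro ℓ
    rw [hxiS ℓ, mul_assoc, (hTinv ℓ).2, mul_one]
  -- ------- T ℓ * ξ_{ℓ+1} = ξ_ℓ * T ℓ + (q-1)(ξ_{ℓ+1} - ξ_ℓ) -------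
  have hTd : ∀ ℓ : Fin n, T ℓ * xi ℓ.succ
      = xi ℓ.castSucc * T ℓ + (q - 1) • (xi ℓ.succ - xi ℓ.castSucc) := by
    intro ℓ
    rw [hxiS ℓ]
    calc T ℓ * (T ℓ * xi ℓ.castSucc * Tinv ℓ)
        = (T ℓ * T ℓ) * (xi ℓ.castSucc * Tinv ℓ) := by noncomm_ring
      _ = ((q - 1) • T ℓ + q • 1) * (xi ℓ.castSucc * Tinv ℓ) := by rw [hTsq ℓ]
      _ = (q - 1) • (T ℓ * (xi ℓ.castSucc * Tinv ℓ))
          + xi ℓ.castSucc * (q • Tinv ℓ) := by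
          rw [add_mul, smul_mul_assoc, smul_mul_assoc, one_mul, ← mul_smul_comm q (xi ℓ.castSucc) (Tinv ℓ)]
      _ = (q - 1) • (T ℓ * (xi ℓ.castSucc * Tinv ℓ))
          + (xi ℓ.castSucc * T ℓ - (q - 1) • xi ℓ.castSucc) := by
          rw [hqTinv ℓ, mul_sub, mul_smul_comm, mul_one]
      _ = xi ℓ.castSucc * T ℓ
          + (q - 1) • (T ℓ * xi ℓ.castSucc * Tinv ℓ - xi ℓ.castSucc) := by
          rw [smul_sub, ← mul_assoc]; abel
  
  -- ------- the conjugated θ-relation -------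
  have hR : ∀ ℓ : Fin n,
      T ℓ * xi ℓ.castSucc * T ℓ * xi ℓ.castSucc
        + xi ℓ.castSucc * T ℓ * xi ℓ.castSucc * T ℓ
      = (q - 1) • (xi ℓ.castSucc * T ℓ * xi ℓ.castSucc) := by
    have main : ∀ m : ℕ, ∀ ℓ : Fin n, (ℓ : ℕ) = m →
        T ℓ * xi ℓ.castSucc * T ℓ * xi ℓ.castSucc
          + xi ℓ.castSucc * T ℓ * xi ℓ.castSucc * T ℓ
        = (q - 1) • (xi ℓ.castSucc * T ℓ * xi ℓ.castSucc) := by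
      intro m
      induction m with
      | zero =>
        intro ℓ hℓ
        rw [hxi0 ℓ.castSucc (by simp [hℓ])]
        exact hT1θ ℓ hℓ
      | succ m IHm =>
        intro ℓ hℓ
        have hmn : m < n := by have := ℓ.isLt; omega
        have hRj := IHm ⟨m, hmn⟩ rfl
        set j : Fin n := ⟨m, hmn⟩ with hjdef
        have hbr := hbraid j ℓ (by simp [hjdef, hℓ])
        have hjv : (j : ℕ) = m := rfl
        have hcx : T ℓ * xi j.castSucc = xi j.castSucc * T ℓ := by
          refine hcomm j.castSucc ℓ ?_ ?_
          · intro h; have := congrArg Fin.val h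
            rw [Fin.coe_castSucc, Fin.coe_castSucc] at this; omega
          · intro h; have := congrArg Fin.val h
            rw [Fin.coe_castSucc, Fin.val_succ] at this; omega
        have e1 : xi ℓ.castSucc = T j * xi j.castSucc * Tinv j := by
          have hcs : ℓ.castSucc = j.succ := Fin.ext (by simp [hjdef, hℓ])
          rw [hcs, hxiS j]
        have hgig : (Tinv ℓ * Tinv j) * (T j * T ℓ) = 1 := by
          calc (Tinv ℓ * Tinv j) * (T j * T ℓ)
              = Tinv ℓ * (Tinv j * T j) * T ℓ := by noncomm_ring
            _ = Tinv ℓ * T ℓ := by rw [(hTinv j).2, mul_one]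
            _ = 1 := (hTinv ℓ).2
        have conj_mul : ∀ x y : A,
            ((T j * T ℓ) * x * (Tinv ℓ * Tinv j)) * ((T j * T ℓ) * y * (Tinv ℓ * Tinv j))
            = (T j * T ℓ) * (x * y) * (Tinv ℓ * Tinv j) := by
          intro x y
          calc ((T j * T ℓ) * x * (Tinv ℓ * Tinv j)) * ((T j * T ℓ) * y * (Tinv ℓ * Tinv j))
              = (T j * T ℓ) * x * (((Tinv ℓ * Tinv j) * (T j * T ℓ)) * (y * (Tinv ℓ * Tinv j))) := by
                noncomm_ring
            _ = (T j * T ℓ) * (x * y) * (Tinv ℓ * Tinv j) := by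
                rw [hgig, one_mul]; noncomm_ring
        have e_b : T ℓ = (T j * T ℓ) * T j * (Tinv ℓ * Tinv j) := by
          calc T ℓ = (T ℓ * T j * T ℓ) * (Tinv ℓ * Tinv j) := by
                rw [show (T ℓ * T j * T ℓ) * (Tinv ℓ * Tinv j)
                      = (T ℓ * T j) * (T ℓ * Tinv ℓ) * Tinv j from by noncomm_ring,
                  (hTinv ℓ).1, mul_one, mul_assoc, (hTinv j).1, mul_one]
            _ = (T j * T ℓ * T j) * (Tinv ℓ * Tinv j) := by rw [hbr]
            _ = (T j * T ℓ) * T j * (Tinv ℓ * Tinv j) := by noncomm_ring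
        have e_x : xi ℓ.castSucc = (T j * T ℓ) * xi j.castSucc * (Tinv ℓ * Tinv j) := by
          rw [e1]
          calc T j * xi j.castSucc * Tinv j
              = T j * (xi j.castSucc * (T ℓ * Tinv ℓ)) * Tinv j := by
                rw [(hTinv ℓ).1, mul_one]
            _ = T j * ((xi j.castSucc * T ℓ) * Tinv ℓ) * Tinv j := by noncomm_ring
            _ = T j * ((T ℓ * xi j.castSucc) * Tinv ℓ) * Tinv j := by rw [hcx]
            _ = (T j * T ℓ) * xi j.castSucc * (Tinv ℓ * Tinv j) := by noncomm_ring
        rw [e_x]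
        set G := T j * T ℓ with hG
        set Gi := Tinv ℓ * Tinv j with hGi
        rw [e_b]
        simp only [conj_mul]
        rw [← add_mul, ← mul_add, hRj, mul_smul_comm, smul_mul_assoc]
    intro ℓ; exact main (ℓ : ℕ) ℓ rfl
  -- ------- adjacent anticommutation -------
  have hadj : ∀ j : Fin n, xi j.castSucc * xi j.succ + xi j.succ * xi j.castSucc = 0 := by
    intro j
    apply hcancel
    rw [hxiS j]
    have step1 : q • (xi j.castSucc * (T j * xi j.castSucc * Tinv j))
        = xi j.castSucc * T j * xi j.castSucc * T j
          - (q - 1) • (xi j.castSucc * T j * xi j.castSucc) := by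
      rw [show xi j.castSucc * (T j * xi j.castSucc * Tinv j)
            = (xi j.castSucc * T j * xi j.castSucc) * Tinv j from by noncomm_ring,
        ← mul_smul_comm q (xi j.castSucc * T j * xi j.castSucc) (Tinv j),
        hqTinv j, mul_sub, mul_smul_comm, mul_one]
    have step2 : q • (T j * xi j.castSucc * Tinv j * xi j.castSucc)
        = T j * xi j.castSucc * T j * xi j.castSucc := by
      rw [show T j * xi j.castSucc * Tinv j * xi j.castSucc
            = (T j * xi j.castSucc) * Tinv j * xi j.castSucc from by noncomm_ring,
        show q • ((T j * xi j.castSucc) * Tinv j * xi j.castSucc)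
            = (T j * xi j.castSucc) * (q • Tinv j) * xi j.castSucc from by
          rw [← smul_mul_assoc, ← mul_smul_comm q (T j * xi j.castSucc) (Tinv j)],
        hqTinv j, mul_sub, sub_mul, mul_smul_comm, mul_one, smul_mul_assoc,
        show T j * xi j.castSucc * xi j.castSucc = T j * (xi j.castSucc * xi j.castSucc) from by
          noncomm_ring,
        hsq j.castSucc, mul_zero, smul_zero, sub_zero]
    rw [smul_add, step1, step2, ← hR j]
    abel
  -- ------- general anticommutation -------
  have hacLT : ∀ m : ℕ, ∀ ℓ : Fin (n + 1), (ℓ : ℕ) = m → ∀ r : Fin (n + 1), (r : ℕ) < m →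
      xi r * xi ℓ + xi ℓ * xi r = 0 := by
    intro m
    induction m using Nat.strong_induction_on with
    | _ m IH =>
      intro ℓ
      induction ℓ using Fin.cases with
      | zero => intro hℓ r hr; simp at hℓ; omega
      | succ j =>
        intro hℓ r hr
        by_cases hrj : (r : ℕ) = (j : ℕ)
        · have hrc : r = j.castSucc := Fin.ext (by simp [hrj])
          rw [hrc]; exact hadj j
        · have hrlt : (r : ℕ) < (j : ℕ) := by simp at hℓ; omega
          have hTc : T j * xi r = xi r * T j := by
            refine hcomm r j ?_ ?_
            · intro h; have := congrArg Fin.val h; simp at this; omega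
            · intro h; have := congrArg Fin.val h; simp at this; omega
          have hTic : Tinv j * xi r = xi r * Tinv j := hTinvComm j (xi r) hTc
          have hIH : xi r * xi j.castSucc + xi j.castSucc * xi r = 0 := by
            refine IH (j : ℕ) (by simp at hℓ; omega) j.castSucc (by simp) r hrlt
          rw [hxiS j]
          calc xi r * (T j * xi j.castSucc * Tinv j) + T j * xi j.castSucc * Tinv j * xi r
              = (xi r * T j) * xi j.castSucc * Tinv j
                + T j * xi j.castSucc * (Tinv j * xi r) := by noncomm_ring
            _ = (T j * xi r) * xi j.castSucc * Tinv j
                + T j * xi j.castSucc * (xi r * Tinv j) := by rw [← hTc, hTic]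
            _ = T j * ((xi r * xi j.castSucc + xi j.castSucc * xi r) * Tinv j) := by noncomm_ring
            _ = 0 := by rw [hIH, zero_mul, mul_zero]
  have hac : ∀ r ℓ : Fin (n + 1), xi r * xi ℓ + xi ℓ * xi r = 0 := by
    intro r ℓ
    rcases lt_trichotomy (r : ℕ) (ℓ : ℕ) with h | h | h
    · exact hacLT (ℓ : ℕ) ℓ rfl r h
    · have : r = ℓ := Fin.ext h
      rw [this, hsq ℓ, add_zero]
    · rw [add_comm]; exact hacLT (r : ℕ) r rfl ℓ h
  exact ⟨hsq, hac, fun ℓ r h1 h2 => hcomm r ℓ h1 h2, hTd, hTe⟩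
end

section
/- The action of S_d on P_d = k[X_1,...,X_d] ⊗ Λ(θ_1,...,θ_d), given by permuting the X variables and by s_i(θ_j) = θ_j + δ_{i,j}(X_i - X_{i+1})θ_{i+1}, is a well-defined group action: each s_i defines a ring automorphism of order 2 and the braid relations s_i s_{i+1} s_i = s_{i+1} s_i s_{i+1} hold on P_d. -/
set_option synthInstance.maxHeartbeats 1000000
set_option maxHeartbeats 1000000


open MvPolynomial

section Twist

variable {R : Type*} [CommRing R] {M : Type*} [AddCommGroup M] [Module R M]

/-- Type synonym twisting the `R`-algebra structure on the exterior algebra by `σ`. -/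
def TwistedEA (R M : Type*) [CommRing R] [AddCommGroup M] [Module R M] (_σ : R →+* R) : Type _ :=
  ExteriorAlgebra R M

instance TwistedEA.instRing (σ : R →+* R) : Ring (TwistedEA R M σ) :=
  inferInstanceAs (Ring (ExteriorAlgebra R M))

noncomputable instance TwistedEA.instAlgebra (σ : R →+* R) : Algebra R (TwistedEA R M σ) :=
  ((algebraMap R (ExteriorAlgebra R M)).comp σ).toAlgebra' fun c x =>
    Algebra.commutes (σ c) (x : ExteriorAlgebra R M)

/-- The `σ`-semilinear lift as an `AlgHom` into the twisted algebra. -/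
noncomputable def slAux (σ : R →+* R) (g : M →+ M)
    (hg : ∀ (r : R) (m : M), g (r • m) = σ r • g m) :
    ExteriorAlgebra R M →ₐ[R] TwistedEA R M σ :=
  ExteriorAlgebra.lift R
    ⟨{ toFun := fun m => (ExteriorAlgebra.ι R (g m) : ExteriorAlgebra R M)
       map_add' := fun m m' => by
         show (ExteriorAlgebra.ι R (g (m + m')) : ExteriorAlgebra R M)
             = ExteriorAlgebra.ι R (g m) + ExteriorAlgebra.ι R (g m')
         rw [map_add, map_add]
       map_smul' := fun r m => by
         show (ExteriorAlgebra.ι R (g (r • m)) : ExteriorAlgebra R M)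
             = algebraMap R (ExteriorAlgebra R M) (σ r) * ExteriorAlgebra.ι R (g m)
         rw [hg, map_smul, Algebra.smul_def] }
     , fun m => ExteriorAlgebra.ι_sq_zero (g m)⟩

/-- A `σ`-semilinear ring endomorphism of the exterior algebra induced by a
`σ`-semilinear map `g` on `M`. -/
noncomputable def slHom (σ : R →+* R) (g : M →+ M)
    (hg : ∀ (r : R) (m : M), g (r • m) = σ r • g m) :
    ExteriorAlgebra R M →+* ExteriorAlgebra R M :=
  (slAux σ g hg).toRingHom

theorem slHom_algebraMap (σ : R →+* R) (g : M →+ M)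
    (hg : ∀ (r : R) (m : M), g (r • m) = σ r • g m) (r : R) :
    slHom σ g hg (algebraMap R (ExteriorAlgebra R M) r)
      = algebraMap R (ExteriorAlgebra R M) (σ r) := by
  show slAux σ g hg (algebraMap R (ExteriorAlgebra R M) r) = _
  rw [AlgHom.commutes]
  rfl

theorem slHom_ι (σ : R →+* R) (g : M →+ M)
    (hg : ∀ (r : R) (m : M), g (r • m) = σ r • g m) (m : M) :
    slHom σ g hg (ExteriorAlgebra.ι R m) = ExteriorAlgebra.ι R (g m) := by
  show slAux σ g hg (ExteriorAlgebra.ι R m) = _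
  exact ExteriorAlgebra.lift_ι_apply R _ _ m

end Twist

section SwapLemmas
variable {k : Type*} [CommSemiring k] {m : ℕ}

lemma swap_invol (a b : Fin m) (p : MvPolynomial (Fin m) k) :
    rename (Equiv.swap a b) (rename (Equiv.swap a b) p) = p := by
  rw [rename_rename]
  have : ⇑(Equiv.swap a b) ∘ ⇑(Equiv.swap a b) = id := by
    funext x; simp [Equiv.swap_apply_self]
  rw [this, rename_id, AlgHom.id_apply]

lemma swap_triple {a b c : Fin m} (hab : a ≠ b) (hbc : b ≠ c) (hac : a ≠ c)
    (p : MvPolynomial (Fin m) k) :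
    rename (Equiv.swap a b) (rename (Equiv.swap b c) (rename (Equiv.swap a b) p))
      = rename (Equiv.swap b c) (rename (Equiv.swap a b) (rename (Equiv.swap b c) p)) := by
  rw [rename_rename, rename_rename, rename_rename, rename_rename]
  have : (⇑(Equiv.swap a b) ∘ ⇑(Equiv.swap b c)) ∘ ⇑(Equiv.swap a b)
      = (⇑(Equiv.swap b c) ∘ ⇑(Equiv.swap a b)) ∘ ⇑(Equiv.swap b c) := by
    have hba := hab.symm
    have hcb := hbc.symm
    have hca := hac.symm
    funext x
    simp only [Function.comp_apply]
    by_cases h1 : x = a <;> by_cases h2 : x = b <;> by_cases h3 : x = c <;>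
      simp_all [Equiv.swap_apply_def]
  rw [this]

end SwapLemmas

section Gmap
variable {k : Type*} [Field k] {n : ℕ}

/-- The ring endomorphism of the polynomial ring given by a transposition of variables. -/
noncomputable def σR (a b : Fin (n+1)) :
    MvPolynomial (Fin (n+1)) k →+* MvPolynomial (Fin (n+1)) k :=
  (rename (Equiv.swap a b) : MvPolynomial (Fin (n+1)) k →ₐ[k] MvPolynomial (Fin (n+1)) k).toRingHom

lemma σR_apply (a b : Fin (n+1)) (p : MvPolynomial (Fin (n+1)) k) :
    σR a b p = rename (Equiv.swap a b) p := rfl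

/-- The `σ`-semilinear map on the free module underlying the action of a transposition. -/
noncomputable def gmap (a b : Fin (n+1)) :
    (Fin (n+1) → MvPolynomial (Fin (n+1)) k) →+ (Fin (n+1) → MvPolynomial (Fin (n+1)) k) where
  toFun v := fun m => rename (Equiv.swap a b) (v m)
    + if m = b then rename (Equiv.swap a b) (v a) * (X a - X b) else 0
  map_zero' := by funext m; simp
  map_add' v w := by
    funext m
    simp only [Pi.add_apply, map_add]
    split_ifs <;> ring

lemma gmap_apply (a b : Fin (n+1)) (v) (m : Fin (n+1)) :
    gmap (k := k) a b v m = rename (Equiv.swap a b) (v m)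
      + if m = b then rename (Equiv.swap a b) (v a) * (X a - X b) else 0 := rfl

lemma gmap_smul (a b : Fin (n+1)) (r : MvPolynomial (Fin (n+1)) k)
    (v : Fin (n+1) → MvPolynomial (Fin (n+1)) k) :
    gmap a b (r • v) = σR a b r • gmap a b v := by
  funext m
  simp only [gmap_apply, σR_apply, Pi.smul_apply, smul_eq_mul, map_mul]
  split_ifs <;> ring

lemma gmap_invol {a b : Fin (n+1)} (hab : a ≠ b) (v) :
    gmap (k := k) a b (gmap a b v) = v := by
  funext m
  by_cases hm : m = b
  · subst hm
    simp only [gmap_apply, eq_self_iff_true, if_true, if_neg hab, add_zero, map_add, map_mul,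
      map_sub, rename_X, Equiv.swap_apply_left, Equiv.swap_apply_right, swap_invol]
    ring
  · simp only [gmap_apply, if_neg hm, add_zero, swap_invol]

lemma gmap_braid {a b c : Fin (n+1)} (hab : a ≠ b) (hbc : b ≠ c) (hac : a ≠ c) (v) :
    gmap (k := k) a b (gmap b c (gmap a b v)) = gmap b c (gmap a b (gmap b c v)) := by
  have hba := hab.symm
  have hcb := hbc.symm
  have hca := hac.symm
  have e1 : Equiv.swap a b c = c := Equiv.swap_apply_of_ne_of_ne hca hcb
  have e2 : Equiv.swap b c a = a := Equiv.swap_apply_of_ne_of_ne hab hac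
  funext m
  by_cases hm1 : m = b
  · subst hm1
    simp only [gmap_apply, eq_self_iff_true, if_true, if_neg hab, if_neg hbc, if_neg hcb,
      if_neg hac, if_neg hca, add_zero, zero_add, map_add, map_mul, map_sub, map_zero, rename_X,
      Equiv.swap_apply_left, Equiv.swap_apply_right, e1, e2, swap_triple hab hbc hac]
    ring
  · by_cases hm2 : m = c
    · subst hm2
      simp only [gmap_apply, eq_self_iff_true, if_true, if_neg hab, if_neg hbc, if_neg hcb,
        if_neg hca, if_neg hac, add_zero, zero_add, map_add, map_mul, map_sub, map_zero, rename_X,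
        Equiv.swap_apply_left, Equiv.swap_apply_right, e1, e2, swap_triple hab hbc hac]
      ring
    · simp only [gmap_apply, if_neg hm1, if_neg hm2, if_neg hab, if_neg hbc, eq_self_iff_true,
        if_true, add_zero, map_add, map_mul, map_sub, map_zero, rename_X,
        Equiv.swap_apply_left, Equiv.swap_apply_right, e1, e2, swap_triple hab hbc hac]

lemma gmap_single_self {a b : Fin (n+1)} (hab : a ≠ b) :
    gmap (k := k) a b (Pi.single a 1)
      = Pi.single a 1 + (X a - X b : MvPolynomial (Fin (n+1)) k)
          • (Pi.single b 1 : Fin (n+1) → MvPolynomial (Fin (n+1)) k) := by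
  funext m
  simp only [gmap_apply, Pi.add_apply, Pi.smul_apply, Pi.single_apply, smul_eq_mul]
  by_cases hm1 : m = a <;> by_cases hm2 : m = b <;>
    simp_all [if_neg hab, mul_comm]

lemma gmap_single_ne {a b j : Fin (n+1)} (hj : j ≠ a) :
    gmap (k := k) a b (Pi.single j 1) = Pi.single j 1 := by
  funext m
  simp only [gmap_apply, Pi.single_apply, if_neg (fun h => hj h.symm : ¬a = j)]
  by_cases hm1 : m = j <;> by_cases hm2 : m = b <;> simp_all

end Gmap

/-- The ring `P_d = k[X₁,…,X_d] ⊗ Λ(θ₁,…,θ_d)` (with `d = n + 1`), realized as the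
exterior algebra over the polynomial ring of the free module of rank `d`. -/
abbrev Pd (k : Type*) [Field k] (n : ℕ) : Type _ :=
  ExteriorAlgebra (MvPolynomial (Fin (n + 1)) k)
    (Fin (n + 1) → MvPolynomial (Fin (n + 1)) k)

/-- The exterior generator `θ_j` of `P_d`. -/
noncomputable def θv {k : Type*} [Field k] {n : ℕ} (j : Fin (n + 1)) : Pd k n :=
  ExteriorAlgebra.ι (MvPolynomial (Fin (n + 1)) k) (Pi.single j 1)

section Sform
variable {k : Type*} [Field k] {n : ℕ}

/-- The ring endomorphism of `P_d` attached to the transposition `(a b)`. -/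
noncomputable def Sform (a b : Fin (n+1)) : Pd k n →+* Pd k n :=
  slHom (σR a b) (gmap a b) (gmap_smul a b)

lemma Sform_algebraMap (a b : Fin (n+1)) (r : MvPolynomial (Fin (n + 1)) k) :
    Sform a b (algebraMap (MvPolynomial (Fin (n + 1)) k) (Pd k n) r)
      = algebraMap (MvPolynomial (Fin (n + 1)) k) (Pd k n) (rename (Equiv.swap a b) r) :=
  slHom_algebraMap _ _ _ r

lemma Sform_ι (a b : Fin (n+1)) (m : Fin (n+1) → MvPolynomial (Fin (n + 1)) k) :
    Sform a b (ExteriorAlgebra.ι _ m) = ExteriorAlgebra.ι _ (gmap a b m) :=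
  slHom_ι _ _ _ m

lemma Sform_θ_self {a b : Fin (n+1)} (hab : a ≠ b) :
    Sform (k := k) (n := n) a b (θv a)
      = θv a + algebraMap (MvPolynomial (Fin (n + 1)) k) (Pd k n) (X a - X b) * θv b := by
  unfold θv
  rw [Sform_ι, gmap_single_self hab, map_add, map_smul, Algebra.smul_def]

lemma Sform_θ_ne {a b j : Fin (n+1)} (hj : j ≠ a) :
    Sform (k := k) (n := n) a b (θv j) = θv j := by
  unfold θv
  rw [Sform_ι, gmap_single_ne hj]

lemma Sform_invol {a b : Fin (n+1)} (hab : a ≠ b) (x : Pd k n) :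
    Sform a b (Sform a b x) = x := by
  induction x using ExteriorAlgebra.induction with
  | algebraMap r => rw [Sform_algebraMap, Sform_algebraMap, swap_invol]
  | ι m => rw [Sform_ι, Sform_ι, gmap_invol hab]
  | mul x y hx hy => rw [map_mul, map_mul, hx, hy]
  | add x y hx hy => rw [map_add, map_add, hx, hy]

lemma Sform_braid {a b c : Fin (n+1)} (hab : a ≠ b) (hbc : b ≠ c) (hac : a ≠ c) (x : Pd k n) :
    Sform a b (Sform b c (Sform a b x)) = Sform b c (Sform a b (Sform b c x)) := by
  induction x using ExteriorAlgebra.induction with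
  | algebraMap r =>
    rw [Sform_algebraMap, Sform_algebraMap, Sform_algebraMap, Sform_algebraMap,
      Sform_algebraMap, Sform_algebraMap, swap_triple hab hbc hac]
  | ι m => rw [Sform_ι, Sform_ι, Sform_ι, Sform_ι, Sform_ι, Sform_ι, gmap_braid hab hbc hac]
  | mul x y hx hy => rw [map_mul, map_mul, map_mul, map_mul, map_mul, map_mul, hx, hy]
  | add x y hx hy => rw [map_add, map_add, map_add, map_add, map_add, map_add, hx, hy]

/-- The ring automorphism of `P_d` attached to the transposition `(a b)`. -/
noncomputable def Sequiv {a b : Fin (n+1)} (hab : a ≠ b) : Pd k n ≃+* Pd k n where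
  toFun := Sform a b
  invFun := Sform a b
  left_inv := Sform_invol hab
  right_inv := Sform_invol hab
  map_mul' := map_mul _
  map_add' := map_add _

lemma Sequiv_apply {a b : Fin (n+1)} (hab : a ≠ b) (x : Pd k n) :
    Sequiv hab x = Sform a b x := rfl

end Sform

/-- the action of `S_d` on `P_d = k[X₁,…,X_d] ⊗ Λ(θ₁,…,θ_d)`, given by
permuting the `X`-variables and `sᵢ(θⱼ) = θⱼ + δ_{i,j}(Xᵢ - Xᵢ₊₁)θᵢ₊₁`, is a
well-defined group action: each `sᵢ` is a ring automorphism of order 2 and the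
braid relations `sᵢ sᵢ₊₁ sᵢ = sᵢ₊₁ sᵢ sᵢ₊₁` hold on `P_d`. -/
theorem Sd_action_on_Pd_well_defined {k : Type*} [Field k] {n : ℕ} :
    ∃ s : Fin n → (Pd k n ≃+* Pd k n),
      (∀ (i : Fin n) (r : MvPolynomial (Fin (n + 1)) k),
        s i (algebraMap (MvPolynomial (Fin (n + 1)) k) (Pd k n) r)
          = algebraMap (MvPolynomial (Fin (n + 1)) k) (Pd k n) (rename (Equiv.swap i.castSucc i.succ) r)) ∧
      (∀ i : Fin n, s i (θv i.castSucc)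
          = θv i.castSucc
            + algebraMap (MvPolynomial (Fin (n + 1)) k) (Pd k n) (X i.castSucc - X i.succ) * θv i.succ) ∧
      (∀ (i : Fin n) (j : Fin (n + 1)), j ≠ i.castSucc → s i (θv j) = θv j) ∧
      (∀ (i : Fin n) (x : Pd k n), s i (s i x) = x) ∧
      (∀ i j : Fin n, (j : ℕ) = (i : ℕ) + 1 →
        ∀ x : Pd k n, s i (s j (s i x)) = s j (s i (s j x))) := by
  have hne : ∀ i : Fin n, i.castSucc ≠ i.succ := fun i => (Fin.castSucc_lt_succ : i.castSucc < i.succ).ne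
  refine ⟨fun i => Sequiv (hne i), ?_, ?_, ?_, ?_, ?_⟩
  · intro i r
    exact Sform_algebraMap _ _ r
  · intro i
    exact Sform_θ_self (hne i)
  · intro i j hj
    exact Sform_θ_ne hj
  · intro i x
    exact Sform_invol (hne i) x
  · intro i j hij x
    have hb : j.castSucc = i.succ := by
      apply Fin.ext
      simp [hij]
    have hbc : i.succ ≠ j.succ := by
      rw [← hb]; exact hne j
    have hac : i.castSucc ≠ j.succ := by
      intro h
      have := congrArg Fin.val h
      simp [hij] at this
      omega
    show Sform i.castSucc i.succ (Sform j.castSucc j.succ (Sform i.castSucc i.succ x))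
        = Sform j.castSucc j.succ (Sform i.castSucc i.succ (Sform j.castSucc j.succ x))
    rw [hb]
    exact Sform_braid (hne i) hbc hac x
end

section
/- The extended Demazure operators ∂_i on P_d = k[X_1,...,X_d] ⊗ Λ(θ_1,...,θ_d), defined by ∂_i(f) = (f - s_i(f))/(X_i - X_{i+1}) using the S_d-action with s_i(θ_j) = θ_j + δ_{i,j}(X_i - X_{i+1})θ_{i+1}, satisfy ∂_i(θ_k) · g-relations: ∂_i commutes with left multiplication by θ_k for k ≠ i, and ∂_i commutes with left multiplication by θ_i - X_{i+1}θ_{i+1}. -/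
open MvPolynomial

section TorsionFree

variable {R : Type*} [CommRing R] {d : ℕ}

/-- exterior generator -/
noncomputable def eθ (R : Type*) [CommRing R] {d : ℕ} (j : Fin d) :
    ExteriorAlgebra R (Fin d → R) :=
  ExteriorAlgebra.ι R (Pi.single j 1)

/-- monomial indexed by a list -/
noncomputable def θL (R : Type*) [CommRing R] {d : ℕ} :
    List (Fin d) → ExteriorAlgebra R (Fin d → R)
  | [] => 1
  | j :: l => eθ R j * θL R l

noncomputable def dualv (R : Type*) [CommRing R] {d : ℕ} (j : Fin d) :
    Module.Dual R (Fin d → R) :=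
  LinearMap.proj j

@[simp] lemma dualv_single (j a : Fin d) :
    dualv R j (Pi.single a (1:R)) = if j = a then 1 else 0 := by
  simp [dualv, Pi.single_apply, eq_comm]

/-- iterated contraction, head applied first -/
noncomputable def cL (R : Type*) [CommRing R] {d : ℕ} :
    List (Fin d) → ExteriorAlgebra R (Fin d → R) →ₗ[R] ExteriorAlgebra R (Fin d → R)
  | [] => LinearMap.id
  | t :: l => (cL R l) ∘ₗ (CliffordAlgebra.contractLeft (dualv R t))

noncomputable def evL (R : Type*) [CommRing R] {d : ℕ} (l : List (Fin d)) :
    ExteriorAlgebra R (Fin d → R) →ₗ[R] R :=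
  (ExteriorAlgebra.algebraMapInv).toLinearMap ∘ₗ cL R l

@[simp] lemma θL_nil : θL R ([] : List (Fin d)) = 1 := rfl
@[simp] lemma θL_cons (a : Fin d) (l : List (Fin d)) : θL R (a :: l) = eθ R a * θL R l := rfl

lemma evL_nil (x : ExteriorAlgebra R (Fin d → R)) :
    evL R ([] : List (Fin d)) x = ExteriorAlgebra.algebraMapInv x := rfl

lemma evL_cons (t : Fin d) (T : List (Fin d)) (x : ExteriorAlgebra R (Fin d → R)) :
    evL R (t :: T) x = evL R T (CliffordAlgebra.contractLeft (dualv R t) x) := rfl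

lemma algebraMapInv_ι (m : Fin d → R) :
    ExteriorAlgebra.algebraMapInv (ExteriorAlgebra.ι R m) = 0 := by
  simp [ExteriorAlgebra.algebraMapInv, ExteriorAlgebra.lift_ι_apply]

lemma contract_ι_mul (t : Fin d) (m : Fin d → R) (y : ExteriorAlgebra R (Fin d → R)) :
    CliffordAlgebra.contractLeft (dualv R t) (ExteriorAlgebra.ι R m * y)
      = dualv R t m • y - ExteriorAlgebra.ι R m * (CliffordAlgebra.contractLeft (dualv R t) y) :=
  CliffordAlgebra.contractLeft_ι_mul (Q := (0 : QuadraticForm R (Fin d → R))) (d := dualv R t) m y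


lemma contract_θL_of_not_mem (t : Fin d) (l : List (Fin d)) (h : t ∉ l) :
    CliffordAlgebra.contractLeft (dualv R t) (θL R l) = 0 := by
  induction l with
  | nil => rw [θL_nil, CliffordAlgebra.contractLeft_one]
  | cons a l ih =>
      rw [θL_cons, eθ, contract_ι_mul, ih (fun hm => h (List.mem_cons_of_mem a hm)),
        mul_zero, sub_zero, dualv_single,
        if_neg (by rintro rfl; exact h List.mem_cons_self), zero_smul]

lemma evL_ι_mul_of_not_mem (T : List (Fin d)) (j : Fin d) (hj : j ∉ T)
    (y : ExteriorAlgebra R (Fin d → R)) :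
    evL R T (ExteriorAlgebra.ι R (Pi.single j (1:R)) * y) = 0 := by
  induction T generalizing y with
  | nil =>
      rw [evL_nil, map_mul, algebraMapInv_ι, zero_mul]
  | cons t T ih =>
      have ht : t ≠ j := fun h => hj (h ▸ (List.mem_cons_self : t ∈ t :: T))
      rw [evL_cons, contract_ι_mul, dualv_single, if_neg ht, zero_smul, zero_sub, map_neg,
        ih (fun h => hj (List.mem_cons_of_mem t h)), neg_zero]

lemma evL_θL (T S : List (Fin d)) (hT : T.Pairwise (· < ·)) (hS : S.Pairwise (· < ·)) :
    evL R T (θL R S) = if T = S then 1 else 0 := by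
  induction T generalizing S with
  | nil =>
      cases S with
      | nil => rw [if_pos rfl, evL_nil, θL_nil, map_one]
      | cons a S =>
          rw [if_neg (by simp), θL_cons, eθ]
          exact evL_ι_mul_of_not_mem [] a (by simp) (θL R S)
  | cons t T ih =>
      cases S with
      | nil =>
          rw [if_neg (by simp), evL_cons, contract_θL_of_not_mem t [] (by simp), map_zero]
      | cons a S =>
          rcases lt_trichotomy t a with h | h | h
          · -- t < a : t ∉ a :: S
            have hnm : t ∉ a :: S := by
              intro hm
              rcases List.mem_cons.1 hm with h' | h'
              · exact absurd h' h.ne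
              · exact absurd ((List.pairwise_cons.1 hS).1 t h') (not_lt.2 h.le)
            rw [if_neg (by intro hh; rw [List.cons.injEq] at hh; exact h.ne hh.1),
              evL_cons, contract_θL_of_not_mem t _ hnm, map_zero]
          · -- t = a
            subst h
            rw [θL_cons, eθ, evL_cons, contract_ι_mul, dualv_single, if_pos rfl, one_smul,
              contract_θL_of_not_mem t S (by
                intro hm
                exact absurd ((List.pairwise_cons.1 hS).1 t hm) (lt_irrefl t)),
              mul_zero, sub_zero]
            rw [ih S ((List.pairwise_cons.1 hT).2) ((List.pairwise_cons.1 hS).2)]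
            by_cases hTS : T = S
            · subst hTS; simp
            · rw [if_neg hTS, if_neg (by intro hh; rw [List.cons.injEq] at hh; exact hTS hh.2)]
          · -- a < t : a ∉ t :: T
            have hnm : a ∉ t :: T := by
              intro hm
              rcases List.mem_cons.1 hm with h' | h'
              · exact absurd h' h.ne
              · exact absurd ((List.pairwise_cons.1 hT).1 a h') (not_lt.2 h.le)
            rw [if_neg (by intro hh; rw [List.cons.injEq] at hh; exact h.ne hh.1.symm), θL_cons, eθ]
            exact evL_ι_mul_of_not_mem (t :: T) a hnm (θL R S)


noncomputable def sortedSpan (R : Type*) [CommRing R] (d : ℕ) :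
    Submodule R (ExteriorAlgebra R (Fin d → R)) :=
  Submodule.span R {x | ∃ l : List (Fin d), l.Pairwise (· < ·) ∧ θL R l = x}

lemma ι_mul_θL_mem (j : Fin d) (m : List (Fin d)) (hm : m.Pairwise (· < ·)) :
    eθ R j * θL R m ∈ Submodule.span R
      {x | ∃ l : List (Fin d), l.Pairwise (· < ·) ∧ (∀ y ∈ l, y = j ∨ y ∈ m) ∧ θL R l = x} := by
  induction m generalizing j with
  | nil =>
      exact Submodule.subset_span ⟨[j], List.pairwise_singleton _ j, by simp, rfl⟩
  | cons a m ih =>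
      rcases lt_trichotomy j a with h | h | h
      · refine Submodule.subset_span ⟨j :: a :: m, ?_, ?_, rfl⟩
        · refine List.pairwise_cons.2 ⟨?_, hm⟩
          intro b hb
          rcases List.mem_cons.1 hb with rfl | hb
          · exact h
          · exact h.trans ((List.pairwise_cons.1 hm).1 b hb)
        · intro y hy
          rcases List.mem_cons.1 hy with rfl | hy
          · exact Or.inl rfl
          · exact Or.inr hy
      · subst h
        rw [θL_cons, ← mul_assoc, eθ, ExteriorAlgebra.ι_sq_zero, zero_mul]
        exact Submodule.zero_mem _
      · have key := ih j (List.pairwise_cons.1 hm).2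
        have hanti : eθ R j * eθ R a = -(eθ R a * eθ R j) :=
          eq_neg_of_add_eq_zero_left (ExteriorAlgebra.ι_add_mul_swap _ _)
        rw [θL_cons, ← mul_assoc, hanti, neg_mul, mul_assoc]
        refine Submodule.neg_mem _ ?_
        have : ∀ z ∈ Submodule.span R
            {x | ∃ l : List (Fin d), l.Pairwise (· < ·) ∧ (∀ y ∈ l, y = j ∨ y ∈ m) ∧ θL R l = x},
            eθ R a * z ∈ Submodule.span R
              {x | ∃ l : List (Fin d), l.Pairwise (· < ·) ∧ (∀ y ∈ l, y = j ∨ y ∈ a :: m) ∧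
                θL R l = x} := by
          intro z hz
          refine Submodule.span_induction ?_ ?_ ?_ ?_ hz
          · rintro _ ⟨l, hl, hlm, rfl⟩
            refine Submodule.subset_span ⟨a :: l, ?_, ?_, rfl⟩
            · refine List.pairwise_cons.2 ⟨?_, hl⟩
              intro b hb
              rcases hlm b hb with rfl | hbm
              · exact h
              · exact (List.pairwise_cons.1 hm).1 b hbm
            · intro y hy
              rcases List.mem_cons.1 hy with rfl | hy
              · exact Or.inr List.mem_cons_self
              · rcases hlm y hy with rfl | hym
                · exact Or.inl rfl
                · exact Or.inr (List.mem_cons_of_mem a hym)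
          · rw [mul_zero]; exact Submodule.zero_mem _
          · intro u v _ _ hu hv
            rw [mul_add]; exact Submodule.add_mem _ hu hv
          · intro r u _ hu
            rw [mul_smul_comm]; exact Submodule.smul_mem _ r hu
        exact this _ key

lemma eθ_mul_mem (j : Fin d) (x : ExteriorAlgebra R (Fin d → R))
    (hx : x ∈ sortedSpan R d) : eθ R j * x ∈ sortedSpan R d := by
  refine Submodule.span_induction ?_ ?_ ?_ ?_ hx
  · rintro _ ⟨l, hl, rfl⟩
    refine Submodule.span_mono ?_ (ι_mul_θL_mem j l hl)
    rintro _ ⟨l', hl', _, rfl⟩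
    exact ⟨l', hl', rfl⟩
  · rw [mul_zero]; exact Submodule.zero_mem _
  · intro u v _ _ hu hv
    rw [mul_add]; exact Submodule.add_mem _ hu hv
  · intro r u _ hu
    rw [mul_smul_comm]; exact Submodule.smul_mem _ r hu

lemma θL_mul_mem (l : List (Fin d)) (x : ExteriorAlgebra R (Fin d → R))
    (hx : x ∈ sortedSpan R d) : θL R l * x ∈ sortedSpan R d := by
  induction l with
  | nil => rw [θL_nil, one_mul]; exact hx
  | cons a l ih => rw [θL_cons, mul_assoc]; exact eθ_mul_mem a _ ih

lemma mem_sortedSpan (x : ExteriorAlgebra R (Fin d → R)) : x ∈ sortedSpan R d := by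
  induction x using ExteriorAlgebra.induction with
  | algebraMap r =>
      rw [Algebra.algebraMap_eq_smul_one]
      exact Submodule.smul_mem _ r (Submodule.subset_span ⟨[], List.Pairwise.nil, rfl⟩)
  | ι m =>
      have : ExteriorAlgebra.ι R m = ∑ j : Fin d, m j • eθ R j := by
        conv_lhs => rw [← Finset.univ_sum_single m]
        rw [map_sum]
        refine Finset.sum_congr rfl fun j _ => ?_
        rw [eθ, ← map_smul, ← Pi.single_smul, smul_eq_mul, mul_one]
      rw [this]
      refine Submodule.sum_mem _ fun j _ => Submodule.smul_mem _ _ ?_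
      have : eθ R j = θL R [j] := by rw [θL_cons, θL_nil, mul_one]
      rw [this]
      exact Submodule.subset_span ⟨[j], List.pairwise_singleton _ j, rfl⟩
  | mul a b ha hb =>
      refine Submodule.span_induction ?_ ?_ ?_ ?_ ha
      · rintro _ ⟨l, hl, rfl⟩
        exact θL_mul_mem l b hb
      · rw [zero_mul]; exact Submodule.zero_mem _
      · intro u v _ _ hu hv
        rw [add_mul]; exact Submodule.add_mem _ hu hv
      · intro r u _ hu
        rw [smul_mul_assoc]; exact Submodule.smul_mem _ r hu
  | add a b ha hb => exact Submodule.add_mem _ ha hb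

theorem extAlg_smul_cancel [IsDomain R] {r : R} (hr : r ≠ 0)
    {x : ExteriorAlgebra R (Fin d → R)} (h : r • x = 0) : x = 0 := by
  classical
  set g : Finset (Fin d) → ExteriorAlgebra R (Fin d → R) :=
    fun S => θL R (S.sort (· ≤ ·)) with hg
  have hx : x ∈ Submodule.span R (Set.range g) := by
    have hle : sortedSpan R d ≤ Submodule.span R (Set.range g) := by
      rw [sortedSpan]
      refine Submodule.span_le.2 ?_
      rintro _ ⟨l, hl, rfl⟩
      refine Submodule.subset_span ⟨l.toFinset, ?_⟩
      show θL R ((l.toFinset).sort (· ≤ ·)) = θL R l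
      rw [(List.toFinset_sort (fun a b : Fin d => a ≤ b) hl.nodup).2 (hl.imp le_of_lt)]
    exact hle (mem_sortedSpan x)
  rw [Submodule.mem_span_range_iff_exists_fun] at hx
  obtain ⟨c, hc⟩ := hx
  have hcoef : ∀ T : Finset (Fin d), c T = 0 := by
    intro T
    have h1 : evL R (T.sort (· ≤ ·)) x = c T := by
      rw [← hc, map_sum]
      have key : ∀ S : Finset (Fin d),
          evL R (T.sort (· ≤ ·)) (c S • g S) = if T = S then c S else 0 := by
        intro S
        rw [map_smul]
        show c S • evL R (T.sort (· ≤ ·)) (θL R (S.sort (· ≤ ·))) = _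
        rw [evL_θL _ _ (Finset.sortedLT_sort T).pairwise (Finset.sortedLT_sort S).pairwise]
        by_cases hTS : T = S
        · subst hTS; simp
        · rw [if_neg, smul_zero, if_neg hTS]
          intro hh
          exact hTS (by rw [← Finset.sort_toFinset T (· ≤ ·), hh, Finset.sort_toFinset])
      rw [Finset.sum_congr rfl fun S _ => key S,
        Finset.sum_ite_eq Finset.univ T (fun S => c S), if_pos (Finset.mem_univ T)]
    have h2 : r * c T = 0 := by
      have h3 := congrArg (evL R (T.sort (· ≤ ·))) h
      rw [map_smul, h1, map_zero, smul_eq_mul] at h3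
      exact h3
    rcases mul_eq_zero.1 h2 with h' | h'
    · exact absurd h' hr
    · exact h'
  rw [← hc]
  simp [hcoef]


theorem extAlg_mul_cancel [IsDomain R] {r : R} (hr : r ≠ 0)
    {x y : ExteriorAlgebra R (Fin d → R)}
    (h : algebraMap R (ExteriorAlgebra R (Fin d → R)) r * x
        = algebraMap R (ExteriorAlgebra R (Fin d → R)) r * y) : x = y := by
  have h0 : r • (x - y) = 0 := by
    rw [smul_sub, Algebra.smul_def, Algebra.smul_def, h, sub_self]
  exact sub_eq_zero.1 (extAlg_smul_cancel hr h0)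

end TorsionFree


/-- the extended Demazure operators `∂ᵢ` on
`P_d = k[X₁,…,X_d] ⊗ Λ(θ₁,…,θ_d)`, characterized by
`(Xᵢ - Xᵢ₊₁)·∂ᵢ f = f - sᵢ f` for the `S_d`-action with
`sᵢ(θⱼ) = θⱼ + δ_{i,j}(Xᵢ - Xᵢ₊₁)θᵢ₊₁`, commute with left multiplication by
`θ_k` for `k ≠ i`, and with left multiplication by `θᵢ - Xᵢ₊₁θᵢ₊₁`. -/
theorem demazure_Pd_theta_commutation {k : Type*} [Field k] {n : ℕ}
    (s : Fin n → (Pd k n →+* Pd k n))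
    (hsX : ∀ (i : Fin n) (r : MvPolynomial (Fin (n + 1)) k),
      s i (algebraMap (MvPolynomial (Fin (n + 1)) k) (Pd k n) r)
        = algebraMap (MvPolynomial (Fin (n + 1)) k) (Pd k n) (rename (Equiv.swap i.castSucc i.succ) r))
    (hsθ : ∀ i : Fin n, s i (θv i.castSucc)
        = θv i.castSucc
          + algebraMap (MvPolynomial (Fin (n + 1)) k) (Pd k n) (X i.castSucc - X i.succ) * θv i.succ)
    (hsθ' : ∀ (i : Fin n) (j : Fin (n + 1)), j ≠ i.castSucc → s i (θv j) = θv j)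
    (Dem : Fin n → Pd k n → Pd k n)
    (hDem : ∀ (i : Fin n) (f : Pd k n),
      algebraMap (MvPolynomial (Fin (n + 1)) k) (Pd k n) (X i.castSucc - X i.succ) * Dem i f = f - s i f)
    (i : Fin n) (f : Pd k n) :
    (∀ j : Fin (n + 1), j ≠ i.castSucc → Dem i (θv j * f) = θv j * Dem i f) ∧
    Dem i ((θv i.castSucc - algebraMap (MvPolynomial (Fin (n + 1)) k) (Pd k n) (X i.succ) * θv i.succ) * f)
      = (θv i.castSucc - algebraMap (MvPolynomial (Fin (n + 1)) k) (Pd k n) (X i.succ) * θv i.succ)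
        * Dem i f := by
  have hc : (X i.castSucc - X i.succ : MvPolynomial (Fin (n + 1)) k) ≠ 0 :=
    sub_ne_zero.2 fun h => (Fin.castSucc_lt_succ (i := i)).ne (MvPolynomial.X_injective h)
  have cancel : ∀ {x y : Pd k n},
      algebraMap (MvPolynomial (Fin (n + 1)) k) (Pd k n) (X i.castSucc - X i.succ) * x
        = algebraMap (MvPolynomial (Fin (n + 1)) k) (Pd k n) (X i.castSucc - X i.succ) * y
      → x = y := fun h => extAlg_mul_cancel hc h
  constructor
  · intro j hj
    apply cancel
    rw [hDem, map_mul, hsθ' i j hj, ← mul_sub, ← hDem i f, ← mul_assoc, ← mul_assoc]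
    congr 1
    exact (Algebra.commutes _ _).symm
  · set t : Pd k n := θv i.castSucc
      - algebraMap (MvPolynomial (Fin (n + 1)) k) (Pd k n) (X i.succ) * θv i.succ with ht
    have hst : s i t = t := by
      rw [ht, map_sub, map_mul, hsθ i, hsθ' i i.succ (Fin.castSucc_lt_succ (i := i)).ne',
        hsX, rename_X, Equiv.swap_apply_right, map_sub]
      noncomm_ring
    apply cancel
    rw [hDem, map_mul, hst, ← mul_sub, ← hDem i f, ← mul_assoc, ← mul_assoc]
    congr 1
    exact (Algebra.commutes _ _).symm
end
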